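/- arXiv:1212.1634 — 8 statements merged into one kernel-verified Lean document; each statement's English description precedes it below -/
import Mathlib

section
/- Let (A_i)_{i∈ℤ/nℤ} be a linear cocycle in GL(2,ℝ) and let (f_i)_{i∈ℤ/nℤ} be a retardable contracting diffeomorphism cocycle with data ((B_i), λ, r, R) which is an ε-perturbation of (A_i), i.e. for each i the set {x : f_i(x) ≠ A_i x} is bounded and sup_{i,x} ‖Df_i(x) − A_i‖ < ε. Suppose for each i an open set N_i ⊂ ℝ² contains both the closed ball of radius R centered at the origin and the set {x : f_i(x) ≠ A_i x}. Then for every m ≥ 0 and all admissible gluing radii r < ρ' < ρ < R, the m-retard (f_{i,m}) is an ε-perturbation of (A_i): sup_{i,x} ‖Df_{i,m}(x) − A_i‖ < ε, and f_{i,m}(x) = A_i x for every x outside N_i. -/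
open Filter Topology

noncomputable section

abbrev M2 := Matrix (Fin 2) (Fin 2) ℝ
abbrev E2 := EuclideanSpace ℝ (Fin 2)

/-- The continuous linear map on Euclidean `ℝ²` induced by a `2 × 2` matrix. -/
def mCLM (A : M2) : E2 →L[ℝ] E2 := Matrix.toEuclideanCLM (𝕜 := ℝ) A

/-- Operator norm (w.r.t. the Euclidean norm) of a `2 × 2` matrix. -/
def mnorm (A : M2) : ℝ := ‖mCLM A‖

/-- Action of a `2 × 2` matrix on a vector of Euclidean `ℝ²`. -/
def mact (A : M2) (x : E2) : E2 := mCLM A x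

/-- The product `A (n-1) * ⋯ * A 0` of a cocycle over `ℤ/nℤ`. -/
def cocProd (n : ℕ) (A : ZMod n → M2) : M2 :=
  (((List.range n).map fun i => A (i : ZMod n)).reverse).prod

/-- The partial product `A (i+j-1) * ⋯ * A i` (indices mod `n`). -/
def partProd (n : ℕ) (A : ZMod n → M2) (i : ZMod n) (j : ℕ) : M2 :=
  (((List.range j).map fun l => A (i + (l : ZMod n))).reverse).prod

/-- The map induced on `ℝ² × ℤ/nℤ` by a cocycle of maps. -/
def step (n : ℕ) (f : ZMod n → E2 → E2) (p : E2 × ZMod n) : E2 × ZMod n :=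
  (f p.2 p.1, p.2 + 1)

/-- A cocycle of maps is contracting if every orbit of the induced map converges to the
zero section. -/
def IsContractingCocycle (n : ℕ) (f : ZMod n → E2 → E2) : Prop :=
  ∀ p : E2 × ZMod n, Tendsto (fun m => ((step n f)^[m] p).1) atTop (𝓝 (0 : E2))

/-- `f` is a `C¹` diffeomorphism of `ℝ²`. -/
def IsC1Diffeo (f : E2 → E2) : Prop :=
  ContDiff ℝ 1 f ∧ Function.Bijective f ∧ ContDiff ℝ 1 (Function.invFun f)

/-- A diffeomorphism cocycle over `ℤ/nℤ`: a family of `C¹` diffeomorphisms of `ℝ²`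
fixing the origin. -/
def IsDiffeoCocycle (n : ℕ) (f : ZMod n → E2 → E2) : Prop :=
  ∀ i, IsC1Diffeo (f i) ∧ f i 0 = 0

/-- `f (i+j-1) ∘ ⋯ ∘ f i`, the composition of `j` consecutive maps of the cocycle. -/
def compUpTo (n : ℕ) (f : ZMod n → E2 → E2) (i : ZMod n) : ℕ → E2 → E2
  | 0 => id
  | j + 1 => f (i + (j : ZMod n)) ∘ compUpTo n f i j

end

/-- A diffeomorphism cocycle is retardable with data `(B, lam, r, R)` if it is linear, given by
`B i`, on the annulus `r ≤ ‖x‖ ≤ R`, and the product of the `B i` in the period is the homothety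
of ratio `lam ∈ (0,1)`, with `0 < r < lam * R`. -/
def IsRetardable (n : ℕ) (f : ZMod n → E2 → E2) (B : ZMod n → M2) (lam r R : ℝ) : Prop :=
  (∀ i, IsUnit (B i)) ∧ 0 < lam ∧ lam < 1 ∧ 0 < r ∧ r < lam * R ∧
  cocProd n B = lam • (1 : M2) ∧
  ∀ (i : ZMod n) (x : E2), r ≤ ‖x‖ → ‖x‖ ≤ R → f i x = mact (B i) x

/-- The `m`-retard of a retardable cocycle, for gluing radii `r < ρ' < ρ < R`. -/
noncomputable def retard (n : ℕ) (f : ZMod n → E2 → E2) (B : ZMod n → M2) (lam ρ' ρ : ℝ) (m : ℕ) :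
    ZMod n → E2 → E2 := fun i x =>
  if ρ ≤ ‖x‖ then f i x
  else if lam ^ m * ρ' ≤ ‖x‖ then mact (B i) x
  else lam ^ m • f i ((lam ^ m)⁻¹ • x)

/-- `f` is an `ε`-perturbation of the linear cocycle `A`: each `f i` coincides with `A i`
outside a bounded set, and `sup_{i,x} ‖D(f i)(x) - A i‖ < ε`. -/
def IsPerturbation (n : ℕ) (ε : ℝ) (f : ZMod n → E2 → E2) (A : ZMod n → M2) : Prop :=
  (∀ i, Bornology.IsBounded {x : E2 | f i x ≠ mact (A i) x}) ∧
  ∃ c : ℝ, c < ε ∧ ∀ (i : ZMod n) (x : E2), ‖fderiv ℝ (f i) x - mCLM (A i)‖ ≤ c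

/-- If a retardable contracting diffeomorphism cocycle is an `ε`-perturbation of
a linear cocycle `A`, supported (together with the ball of radius `R`) in open sets `N i`, then
every `m`-retard is again an `ε`-perturbation of `A` and coincides with `A` outside `N i`. -/
theorem stmt3 (n : ℕ) (hn : 1 ≤ n) (ε : ℝ) (A B : ZMod n → M2) (f : ZMod n → E2 → E2)
    (lam r R : ℝ)
    (hAunit : ∀ i, IsUnit (A i))
    (hdiff : IsDiffeoCocycle n f) (hcontr : IsContractingCocycle n f)
    (hret : IsRetardable n f B lam r R)
    (hpert : IsPerturbation n ε f A)
    (N : ZMod n → Set E2)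
    (hNopen : ∀ i, IsOpen (N i))
    (hNball : ∀ i, Metric.closedBall (0 : E2) R ⊆ N i)
    (hNsupp : ∀ i, {x : E2 | f i x ≠ mact (A i) x} ⊆ N i) :
    ∀ (m : ℕ) (ρ' ρ : ℝ), r < ρ' → ρ' < ρ → ρ < R →
      IsPerturbation n ε (retard n f B lam ρ' ρ m) A ∧
      ∀ (i : ZMod n) (x : E2), x ∉ N i → retard n f B lam ρ' ρ m i x = mact (A i) x := by
  obtain ⟨hBunit, hlam0, hlam1, hr0, hrR, hprod, hlin⟩ := hret
  obtain ⟨hbd, c, hcε, hder⟩ := hpert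
  have hfd : ∀ i : ZMod n, Differentiable ℝ (f i) := fun i =>
    ((hdiff i).1.1).differentiable one_ne_zero
  have hR0 : 0 < R := by nlinarith
  have hrR' : r < R := by nlinarith
  -- norm of B i - A i as CLMs is at most c
  have hBA : ∀ i, ‖mCLM (B i) - mCLM (A i)‖ ≤ c := by
    intro i
    obtain ⟨y, hy⟩ := exists_norm_eq E2 (show (0:ℝ) ≤ (r + R) / 2 by linarith)
    have hy1 : r < ‖y‖ := by rw [hy]; linarith
    have hy2 : ‖y‖ < R := by rw [hy]; linarith
    have hopen : IsOpen {z : E2 | r < ‖z‖ ∧ ‖z‖ < R} :=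
      (isOpen_lt continuous_const continuous_norm).inter
        (isOpen_lt continuous_norm continuous_const)
    have heq : f i =ᶠ[𝓝 y] mact (B i) := by
      filter_upwards [hopen.mem_nhds ⟨hy1, hy2⟩] with z hz
      exact hlin i z hz.1.le hz.2.le
    have h1 : fderiv ℝ (f i) y = mCLM (B i) := by
      rw [heq.fderiv_eq]; exact (mCLM (B i)).fderiv
    have := hder i y
    rw [h1] at this
    exact this
  intro m ρ' ρ hrρ' hρ'ρ hρR
  have hρ'0 : 0 < ρ' := hr0.trans hrρ'
  have hk0 : (0:ℝ) < lam ^ m := pow_pos hlam0 m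
  have hk1 : lam ^ m ≤ 1 := pow_le_one₀ hlam0.le hlam1.le
  set k := lam ^ m with hkdef
  -- the retarded map agrees with f outside the ball of radius ρ
  have houter : ∀ (i : ZMod n) (x : E2), ρ ≤ ‖x‖ →
      retard n f B lam ρ' ρ m i x = f i x := by
    intro i x hx
    unfold retard
    rw [if_pos hx]
  -- the derivative bound for the retarded cocycle
  have hfd' : ∀ (i : ZMod n) (x : E2),
      ‖fderiv ℝ (retard n f B lam ρ' ρ m i) x - mCLM (A i)‖ ≤ c := by
    intro i x
    rcases lt_or_ge ‖x‖ (k * ρ') with hx | hx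
    · -- inner region : retard = k • f (k⁻¹ • ·)
      have hopen : IsOpen {z : E2 | ‖z‖ < k * ρ'} :=
        isOpen_lt continuous_norm continuous_const
      have heq : retard n f B lam ρ' ρ m i =ᶠ[𝓝 x] fun z => k • f i (k⁻¹ • z) := by
        filter_upwards [hopen.mem_nhds hx] with z hz
        have h1 : ¬ ρ ≤ ‖z‖ := by
          push_neg
          calc ‖z‖ < k * ρ' := hz
            _ ≤ ρ' := by nlinarith
            _ < ρ := hρ'ρ
        have h2 : ¬ k * ρ' ≤ ‖z‖ := not_le.2 hz
        unfold retard
        rw [if_neg h1, if_neg h2]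
      rw [heq.fderiv_eq]
      set D := fderiv ℝ (f i) (k⁻¹ • x) with hD
      have hs : HasFDerivAt (fun z : E2 => k⁻¹ • z)
          (k⁻¹ • ContinuousLinearMap.id ℝ E2) x := by
        exact (hasFDerivAt_id x).const_smul k⁻¹
      have hcomp : HasFDerivAt (fun z : E2 => f i (k⁻¹ • z))
          (D.comp (k⁻¹ • ContinuousLinearMap.id ℝ E2)) x :=
        ((hfd i (k⁻¹ • x)).hasFDerivAt).comp x hs
      have hsm : HasFDerivAt (fun z : E2 => k • f i (k⁻¹ • z))
          (k • D.comp (k⁻¹ • ContinuousLinearMap.id ℝ E2)) x := hcomp.const_smul k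
      have hDeq : k • D.comp (k⁻¹ • ContinuousLinearMap.id ℝ E2) = D := by
        ext z
        simp [ContinuousLinearMap.smul_apply, smul_smul,
          mul_inv_cancel₀ hk0.ne', map_smul]
      rw [hDeq] at hsm
      rw [hsm.fderiv]
      exact hder i _
    · rcases lt_or_ge ‖x‖ R with hxR | hxR
      · -- middle region : retard = B i
        have hopen : IsOpen {z : E2 | k * r < ‖z‖ ∧ ‖z‖ < R} :=
          (isOpen_lt continuous_const continuous_norm).inter
            (isOpen_lt continuous_norm continuous_const)
        have hxmem : k * r < ‖x‖ := lt_of_lt_of_le (by nlinarith) hx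
        have heq : retard n f B lam ρ' ρ m i =ᶠ[𝓝 x] mact (B i) := by
          filter_upwards [hopen.mem_nhds ⟨hxmem, hxR⟩] with z hz
          obtain ⟨hz1, hz2⟩ := hz
          unfold retard
          by_cases h1 : ρ ≤ ‖z‖
          · rw [if_pos h1]
            exact hlin i z (by linarith) hz2.le
          · rw [if_neg h1]
            by_cases h2 : k * ρ' ≤ ‖z‖
            · rw [if_pos h2]
            · rw [if_neg h2]
              push_neg at h1 h2
              have hnz : ‖(k⁻¹ : ℝ) • z‖ = k⁻¹ * ‖z‖ := by
                rw [norm_smul, Real.norm_eq_abs, abs_of_pos (inv_pos.2 hk0)]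
              have h3 : r ≤ ‖(k⁻¹ : ℝ) • z‖ := by
                rw [hnz]
                rw [le_inv_mul_iff₀ hk0]
                linarith
              have h4 : ‖(k⁻¹ : ℝ) • z‖ ≤ R := by
                rw [hnz, inv_mul_le_iff₀ hk0]
                nlinarith
              rw [hlin i _ h3 h4]
              show k • mCLM (B i) (k⁻¹ • z) = mCLM (B i) z
              rw [map_smul, smul_smul, mul_inv_cancel₀ hk0.ne', one_smul]
        rw [heq.fderiv_eq,
          show fderiv ℝ (mact (B i)) x = mCLM (B i) from (mCLM (B i)).fderiv]
        exact hBA i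
      · -- outer region : retard = f
        have hρx : ρ < ‖x‖ := lt_of_lt_of_le hρR hxR
        have hopen : IsOpen {z : E2 | ρ < ‖z‖} :=
          isOpen_lt continuous_const continuous_norm
        have heq : retard n f B lam ρ' ρ m i =ᶠ[𝓝 x] f i := by
          filter_upwards [hopen.mem_nhds hρx] with z hz
          exact houter i z hz.le
        rw [heq.fderiv_eq]
        exact hder i x
  refine ⟨⟨?_, c, hcε, hfd'⟩, ?_⟩
  · -- boundedness of the support of retard - A
    intro i
    apply Bornology.IsBounded.subset
      ((Metric.isBounded_closedBall (x := (0:E2)) (r := ρ)).union (hbd i))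
    intro x hx
    by_cases h : ρ ≤ ‖x‖
    · right
      intro hfa
      exact hx (by rw [houter i x h]; exact hfa)
    · left
      push_neg at h
      simp only [Metric.mem_closedBall, dist_zero_right]
      exact h.le
  · -- equality with A outside N i
    intro i x hxN
    have hRx : R < ‖x‖ := by
      by_contra h
      push_neg at h
      exact hxN (hNball i (by simpa [Metric.mem_closedBall, dist_zero_right] using h))
    rw [houter i x (by linarith)]
    by_contra h
    exact hxN (hNsupp i h)
end

section
/- Let V be a real normed vector space and let a : ℝ → V be a C^∞ map. Then for every δ > 0 there exists a C^∞ non-decreasing function θ : [0,∞) → [0,1] such that θ vanishes on a neighborhood of 0, θ(t) = 1 for every t > 1, and for every t > 0 the derivative of the composition satisfies ‖(a∘θ)'(t)‖ < δ/t. -/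
open Filter Topology

lemma expNegInvGlue_monotone : Monotone expNegInvGlue := by
  intro x y hxy
  rcases le_or_gt x 0 with hx | hx
  · rw [expNegInvGlue.zero_of_nonpos hx]
    exact expNegInvGlue.nonneg y
  · have hy : 0 < y := hx.trans_le hxy
    simp only [expNegInvGlue, not_le.2 hx, not_le.2 hy, if_neg, if_false]
    exact Real.exp_le_exp.2 (neg_le_neg (inv_anti₀ hx hxy))

lemma smoothTransition_monotone : Monotone Real.smoothTransition := by
  intro x y hxy
  unfold Real.smoothTransition
  have h1 : expNegInvGlue x ≤ expNegInvGlue y := expNegInvGlue_monotone hxy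
  have h2 : expNegInvGlue (1 - y) ≤ expNegInvGlue (1 - x) :=
    expNegInvGlue_monotone (by linarith)
  have d1 := Real.smoothTransition.pos_denom x
  have d2 := Real.smoothTransition.pos_denom y
  rw [div_le_div_iff₀ d1 d2]
  nlinarith [expNegInvGlue.nonneg x, expNegInvGlue.nonneg y,
    expNegInvGlue.nonneg (1 - x), expNegInvGlue.nonneg (1 - y)]

lemma deriv_smoothTransition_bound :
    ∃ B : ℝ, 0 ≤ B ∧ ∀ x : ℝ, |deriv Real.smoothTransition x| ≤ B := by
  have hcont : Continuous (deriv Real.smoothTransition) :=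
    (Real.smoothTransition.contDiff (n := ⊤)).continuous_deriv (mod_cast le_top)
  obtain ⟨C, hC⟩ := (isCompact_Icc (a := (0:ℝ)) (b := 1)).exists_bound_of_continuousOn
    hcont.continuousOn
  refine ⟨max C 0, le_max_right _ _, fun x => ?_⟩
  rcases le_or_gt 0 x with hx | hx
  · rcases le_or_gt x 1 with hx1 | hx1
    · exact le_max_of_le_left (hC x ⟨hx, hx1⟩)
    · have : deriv Real.smoothTransition x = 0 := by
        have heq : Real.smoothTransition =ᶠ[𝓝 x] fun _ => (1:ℝ) :=
          eventually_of_mem (Ioi_mem_nhds hx1)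
            (fun y hy => Real.smoothTransition.one_of_one_le (le_of_lt hy))
        rw [heq.deriv_eq, deriv_const]
      simp [this, le_max_right]
  · have : deriv Real.smoothTransition x = 0 := by
      have heq : Real.smoothTransition =ᶠ[𝓝 x] fun _ => (0:ℝ) :=
        eventually_of_mem (Iio_mem_nhds hx)
          (fun y hy => Real.smoothTransition.zero_of_nonpos (le_of_lt hy))
      rw [heq.deriv_eq, deriv_const]
    simp [this, le_max_right]

/-- Any smooth path can be smoothly reparametrized so that the derivative of
the reparametrized path at time `t > 0` has norm less than `δ / t`. -/
theorem stmt5 (V : Type*) [NormedAddCommGroup V] [NormedSpace ℝ V]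
    (a : ℝ → V) (ha : ContDiff ℝ (⊤ : ℕ∞) a) (δ : ℝ) (hδ : 0 < δ) :
    ∃ θ : ℝ → ℝ, ContDiff ℝ (⊤ : ℕ∞) θ ∧ MonotoneOn θ (Set.Ici 0) ∧
      (∀ t ∈ Set.Ici (0 : ℝ), θ t ∈ Set.Icc (0 : ℝ) 1) ∧
      (∃ t₀ > (0 : ℝ), ∀ t ≤ t₀, θ t = 0) ∧
      (∀ t > (1 : ℝ), θ t = 1) ∧
      ∀ t > (0 : ℝ), ‖deriv (a ∘ θ) t‖ < δ / t := by
  obtain ⟨B, hB0, hB⟩ := deriv_smoothTransition_bound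
  -- bound on deriv a on [0,1]
  obtain ⟨M₀, hM₀⟩ := (isCompact_Icc (a := (0:ℝ)) (b := 1)).exists_bound_of_continuousOn
    ((ha.continuous_deriv (mod_cast le_top)).continuousOn)
  set M : ℝ := max M₀ 0 with hMdef
  have hM0 : 0 ≤ M := le_max_right _ _
  have hM : ∀ x ∈ Set.Icc (0:ℝ) 1, ‖deriv a x‖ ≤ M :=
    fun x hx => le_max_of_le_left (hM₀ x hx)
  set K : ℝ := δ / (2 * (B + 1) * (M + 1)) with hKdef
  have hK : 0 < K := by
    apply div_pos hδ
    positivity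
  set c : ℝ := Real.exp (-1 / K) / 2 with hcdef
  have hc : 0 < c := by positivity
  set ε : ℝ := Real.sqrt c / 2 with hεdef
  have hsc : 0 < Real.sqrt c := Real.sqrt_pos.2 hc
  have hε : 0 < ε := by positivity
  have hεlt : ε < Real.sqrt c := by
    rw [hεdef]; linarith
  set φ : ℝ → ℝ := Real.smoothTransition with hφdef
  have hpos : ∀ t : ℝ, 0 < t ^ 2 + c := fun t => by positivity
  set g : ℝ → ℝ := fun t => 1 + K * Real.log (t ^ 2 + c) with hgdef
  set θ : ℝ → ℝ := fun t => φ (g t) * φ (t / ε) with hθdef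
  have hg_smooth : ContDiff ℝ (⊤ : ℕ∞) g := by
    apply contDiff_const.add
    apply contDiff_const.mul
    exact ((contDiff_id.pow 2).add contDiff_const).log (fun t => (hpos t).ne')
  have hθ_smooth : ContDiff ℝ (⊤ : ℕ∞) θ :=
    ((Real.smoothTransition.contDiff).comp hg_smooth).mul
      ((Real.smoothTransition.contDiff).comp (contDiff_id.div_const ε))
  -- θ vanishes on (-∞, √c)
  have hzero : ∀ t < Real.sqrt c, θ t = 0 := by
    intro t ht
    rcases le_or_gt t 0 with ht0 | ht0
    · have : φ (t / ε) = 0 :=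
        Real.smoothTransition.zero_of_nonpos (div_nonpos_iff.2 (Or.inr ⟨ht0, hε.le⟩))
      simp [hθdef, this]
    · have ht2 : t ^ 2 < c := (Real.lt_sqrt ht0.le).1 ht
      have hlog : Real.log (t ^ 2 + c) < -1 / K := by
        have h1 : t ^ 2 + c < Real.exp (-1 / K) := by
          rw [hcdef] at ht2 ⊢; linarith
        calc Real.log (t ^ 2 + c) < Real.log (Real.exp (-1 / K)) :=
              Real.log_lt_log (hpos t) h1
          _ = -1 / K := Real.log_exp _
      have harg : g t ≤ 0 := by
        have : K * Real.log (t ^ 2 + c) < K * (-1 / K) :=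
          (mul_lt_mul_iff_right₀ hK).2 hlog
        have hK' : K * (-1 / K) = -1 := by field_simp
        rw [hgdef]; dsimp only; nlinarith
      have : φ (g t) = 0 := Real.smoothTransition.zero_of_nonpos harg
      simp [hθdef, this]
  have hclt1 : c < 1 := by
    rw [hcdef]
    have : Real.exp (-1 / K) < 1 := by
      apply Real.exp_lt_one_iff.2
      rw [neg_div]
      exact neg_lt_zero.2 (by positivity)
    linarith
  have hsc1 : Real.sqrt c < 1 := by
    rw [show (1:ℝ) = Real.sqrt 1 by simp]
    exact Real.sqrt_lt_sqrt hc.le hclt1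
  refine ⟨θ, hθ_smooth, ?_, ?_, ⟨Real.sqrt c / 2, by positivity, fun t ht =>
    hzero t (lt_of_le_of_lt ht (by linarith))⟩, ?_, ?_⟩
  · -- monotone on Ici 0
    intro s hs t ht hst
    have h1 : φ (g s) ≤ φ (g t) := by
      apply smoothTransition_monotone
      rw [hgdef]
      dsimp only
      have : s ^ 2 ≤ t ^ 2 := by nlinarith [Set.mem_Ici.1 hs]
      have hlog : Real.log (s ^ 2 + c) ≤ Real.log (t ^ 2 + c) :=
        Real.log_le_log (hpos s) (by linarith)
      nlinarith
    have h2 : φ (s / ε) ≤ φ (t / ε) :=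
      smoothTransition_monotone (by gcongr)
    exact mul_le_mul h1 h2 (Real.smoothTransition.nonneg _) (Real.smoothTransition.nonneg _)
  · -- range
    intro t _
    exact ⟨mul_nonneg (Real.smoothTransition.nonneg _) (Real.smoothTransition.nonneg _),
      mul_le_one₀ (Real.smoothTransition.le_one _) (Real.smoothTransition.nonneg _)
        (Real.smoothTransition.le_one _)⟩
  · -- equals 1 for t > 1
    intro t ht
    have h1 : φ (g t) = 1 := by
      apply Real.smoothTransition.one_of_one_le
      rw [hgdef]
      dsimp only
      have : (1:ℝ) < t ^ 2 + c := by nlinarith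
      have := Real.log_pos this
      nlinarith
    have h2 : φ (t / ε) = 1 := by
      apply Real.smoothTransition.one_of_one_le
      rw [le_div_iff₀ hε]
      nlinarith
    simp [hθdef, h1, h2]
  · -- derivative bound
    intro t ht
    rcases lt_or_ge t (Real.sqrt c) with htc | htc
    · -- θ is 0 near t, so deriv is 0
      have heq : (a ∘ θ) =ᶠ[𝓝 t] fun _ => a 0 := by
        apply eventually_of_mem (Iio_mem_nhds htc)
        intro y hy
        simp [Function.comp, hzero y hy]
      rw [heq.deriv_eq, deriv_const]
      simp only [norm_zero]
      positivity
    · -- t ≥ √c > ε : near t, θ agrees with φ ∘ g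
      have htε : ε < t := hεlt.trans_le htc
      have heq : θ =ᶠ[𝓝 t] fun s => φ (g s) := by
        apply eventually_of_mem (Ioi_mem_nhds htε)
        intro y hy
        have : φ (y / ε) = 1 :=
          Real.smoothTransition.one_of_one_le ((one_le_div hε).2 (le_of_lt hy))
        simp [hθdef, this]
      have heq' : (a ∘ θ) =ᶠ[𝓝 t] (a ∘ fun s => φ (g s)) := heq.fun_comp a
      rw [heq'.deriv_eq]
      -- compute the derivative
      have h1 : HasDerivAt (fun s : ℝ => s ^ 2 + c) (2 * t) t := by
        simpa using (hasDerivAt_pow 2 t).add_const c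
      have h2 : HasDerivAt (fun s : ℝ => Real.log (s ^ 2 + c)) (2 * t / (t ^ 2 + c)) t :=
        h1.log (hpos t).ne'
      have h3 : HasDerivAt g (K * (2 * t / (t ^ 2 + c))) t := by
        rw [hgdef]
        exact (h2.const_mul K).const_add 1
      have h4 : HasDerivAt φ (deriv φ (g t)) (g t) :=
        ((Real.smoothTransition.contDiff (n := ⊤)).differentiable (by simp)).differentiableAt.hasDerivAt
      have h5 : HasDerivAt (fun s => φ (g s)) (deriv φ (g t) * (K * (2 * t / (t ^ 2 + c)))) t :=
        h4.comp t h3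
      have h6 : HasDerivAt a (deriv a (φ (g t))) (φ (g t)) :=
        ((ha.differentiable (by simp)) (φ (g t))).hasDerivAt
      have h7 : HasDerivAt (a ∘ fun s => φ (g s))
          ((deriv φ (g t) * (K * (2 * t / (t ^ 2 + c)))) • deriv a (φ (g t))) t :=
        h6.scomp t h5
      rw [h7.deriv]
      rw [norm_smul, Real.norm_eq_abs]
      -- now the numeric bound
      have hφgt : φ (g t) ∈ Set.Icc (0:ℝ) 1 :=
        ⟨Real.smoothTransition.nonneg _, Real.smoothTransition.le_one _⟩
      have hMa : ‖deriv a (φ (g t))‖ ≤ M := hM _ hφgt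
      have hfrac_pos : 0 < 2 * t / (t ^ 2 + c) := by positivity
      have habs : |deriv φ (g t) * (K * (2 * t / (t ^ 2 + c)))| ≤
          B * (K * (2 * t / (t ^ 2 + c)))  := by
        rw [abs_mul]
        apply mul_le_mul (hB _) (le_of_eq (abs_of_pos (by positivity))) (abs_nonneg _) hB0
      have hfrac : 2 * t / (t ^ 2 + c) < 2 / t := by
        rw [div_lt_div_iff₀ (hpos t) ht]
        nlinarith
      calc |deriv φ (g t) * (K * (2 * t / (t ^ 2 + c)))| * ‖deriv a (φ (g t))‖
          ≤ (B * (K * (2 * t / (t ^ 2 + c)))) * M := by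
            apply mul_le_mul habs hMa (norm_nonneg _) (by positivity)
        _ ≤ (B + 1) * (M + 1) * K * (2 * t / (t ^ 2 + c)) := by
            nlinarith [mul_nonneg (mul_pos hK hfrac_pos).le
              (show (0:ℝ) ≤ B + M + 1 by linarith), mul_pos hK hfrac_pos]
        _ < (B + 1) * (M + 1) * K * (2 / t) := by
            apply mul_lt_mul_of_pos_left hfrac (by positivity)
        _ = δ / t := by
            rw [hKdef]
            field_simp
end

section
/- Let T ∈ GL(2,ℝ) with det T > 0, let λ ∈ (0,1) and set Q := λ·Id. Then for every ε > 0 there exist an integer h ≥ 1 and matrices J_0, …, J_{h−1} and L_0, …, L_{h−1} in GL(2,ℝ) such that ‖J_i − Q‖ < ε and ‖L_i − Q‖ < ε for every i, and there exist c, c' ∈ (0,1) with T·(J_{h−1}···J_0) = c·Id and (L_{h−1}···L_0)·T = c'·Id; that is, both products are contracting homotheties. -/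
/-- The product `J (h-1) * ⋯ * J 0` of a finite tuple of matrices. -/
def finProdRev {h : ℕ} (J : Fin h → M2) : M2 := ((List.ofFn J).reverse).prod

noncomputable section Stmt6Aux

open Real Filter

def mCLMₗ : M2 →ₗ[ℝ] (E2 →L[ℝ] E2) where
  toFun := mCLM
  map_add' A B := by simp [mCLM]
  map_smul' r A := by simp [mCLM]

lemma continuous_mnorm : Continuous mnorm :=
  continuous_norm.comp mCLMₗ.continuous_of_finiteDimensional

lemma mnorm_zero : mnorm (0 : M2) = 0 := by simp [mnorm, mCLM]

lemma mnorm_smul (r : ℝ) (A : M2) : mnorm (r • A) = |r| * mnorm A := by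
  have h : mCLM (r • A) = r • mCLM A := by simp [mCLM]
  rw [mnorm, h, mnorm, ← Real.norm_eq_abs]
  exact norm_smul r (mCLM A)

def rot (θ : ℝ) : M2 := !![Real.cos θ, -Real.sin θ; Real.sin θ, Real.cos θ]
def shU (t : ℝ) : M2 := !![1, t; 0, 1]
def shL (t : ℝ) : M2 := !![1, 0; t, 1]
def dA (s : ℝ) : M2 := !![Real.exp s, 0; 0, 1]
def dB (s : ℝ) : M2 := !![1, 0; 0, Real.exp s]

/-- `A` is a product of a nonempty list of invertible matrices `δ`-close to `1`. -/
def Dec (δ : ℝ) (A : M2) : Prop :=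
  ∃ l : List M2, l ≠ [] ∧ (∀ B ∈ l, IsUnit B ∧ mnorm (B - 1) < δ) ∧ l.prod = A

lemma Dec.mul {δ : ℝ} {A B : M2} (hA : Dec δ A) (hB : Dec δ B) : Dec δ (A * B) := by
  obtain ⟨l1, h1, hm1, hp1⟩ := hA
  obtain ⟨l2, h2, hm2, hp2⟩ := hB
  refine ⟨l1 ++ l2, by simp [h1], ?_, by simp [List.prod_append, hp1, hp2]⟩
  intro C hC
  rcases List.mem_append.1 hC with h | h
  · exact hm1 C h
  · exact hm2 C h

lemma onePar {f : ℝ → M2} (hf : Continuous f) (hmul : ∀ s t, f s * f t = f (s + t))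
    (h0 : f 0 = 1) (t : ℝ) {δ : ℝ} (hδ : 0 < δ) : Dec δ (f t) := by
  have hunit : ∀ s, IsUnit (f s) := by
    intro s
    exact ⟨⟨f s, f (-s), by rw [hmul]; simp [h0], by rw [hmul]; simp [h0]⟩, rfl⟩
  have hpow : ∀ (n : ℕ) (s : ℝ), f s ^ n = f (n * s) := by
    intro n
    induction n with
    | zero => intro s; simp [h0]
    | succ k ih =>
        intro s
        rw [pow_succ, ih, hmul]
        congr 1
        push_cast
        ring
  have htend : Tendsto (fun n : ℕ => mnorm (f (t / n) - 1)) atTop (nhds 0) := by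
    have h1 : Tendsto (fun n : ℕ => t / n) atTop (nhds 0) :=
      tendsto_const_div_atTop_nhds_zero_nat t
    have h2 : Continuous (fun s => mnorm (f s - 1)) :=
      continuous_mnorm.comp ((hf.sub continuous_const))
    have := (h2.tendsto 0).comp h1
    simpa [h0, mnorm_zero, Function.comp_def] using this
  have hev : ∀ᶠ n : ℕ in atTop, mnorm (f (t / n) - 1) < δ :=
    htend.eventually (gt_mem_nhds hδ)
  obtain ⟨N, hN⟩ := hev.exists_forall_of_atTop
  set n := max N 1 with hn
  have hn1 : 1 ≤ n := le_max_right _ _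
  have hnN : N ≤ n := le_max_left _ _
  refine ⟨List.replicate n (f (t / n)), ?_, ?_, ?_⟩
  · exact List.ne_nil_of_length_pos (by simp only [List.length_replicate]; omega)
  · intro B hB
    rw [List.eq_of_mem_replicate hB]
    exact ⟨hunit _, hN n hnN⟩
  · rw [List.prod_replicate, hpow]
    congr 1
    field_simp

lemma fin2_ext {A B : M2} (h00 : A 0 0 = B 0 0) (h01 : A 0 1 = B 0 1)
    (h10 : A 1 0 = B 1 0) (h11 : A 1 1 = B 1 1) : A = B := by
  ext i j
  fin_cases i <;> fin_cases j <;> assumption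

lemma dec_shU {δ : ℝ} (hδ : 0 < δ) (t : ℝ) : Dec δ (shU t) := by
  refine onePar ?_ ?_ ?_ t hδ
  · apply continuous_matrix
    intro i j
    fin_cases i <;> fin_cases j <;> simp [shU] <;> fun_prop
  · intro s t
    apply fin2_ext <;> simp [shU, Matrix.mul_apply, Fin.sum_univ_two] <;> ring
  · apply fin2_ext <;> simp [shU, Matrix.one_apply]

lemma dec_shL {δ : ℝ} (hδ : 0 < δ) (t : ℝ) : Dec δ (shL t) := by
  refine onePar ?_ ?_ ?_ t hδ
  · apply continuous_matrix
    intro i j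
    fin_cases i <;> fin_cases j <;> simp [shL] <;> fun_prop
  · intro s t
    apply fin2_ext <;> simp [shL, Matrix.mul_apply, Fin.sum_univ_two] <;> ring
  · apply fin2_ext <;> simp [shL, Matrix.one_apply]

lemma dec_dA {δ : ℝ} (hδ : 0 < δ) (s : ℝ) : Dec δ (dA s) := by
  refine onePar ?_ ?_ ?_ s hδ
  · apply continuous_matrix
    intro i j
    fin_cases i <;> fin_cases j <;> simp [dA] <;> fun_prop
  · intro s t
    apply fin2_ext <;> simp [dA, Matrix.mul_apply, Fin.sum_univ_two, Real.exp_add]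
  · apply fin2_ext <;> simp [dA, Matrix.one_apply]

lemma dec_dB {δ : ℝ} (hδ : 0 < δ) (s : ℝ) : Dec δ (dB s) := by
  refine onePar ?_ ?_ ?_ s hδ
  · apply continuous_matrix
    intro i j
    fin_cases i <;> fin_cases j <;> simp [dB] <;> fun_prop
  · intro s t
    apply fin2_ext <;> simp [dB, Matrix.mul_apply, Fin.sum_univ_two, Real.exp_add]
  · apply fin2_ext <;> simp [dB, Matrix.one_apply]

lemma dec_rot {δ : ℝ} (hδ : 0 < δ) (θ : ℝ) : Dec δ (rot θ) := by
  refine onePar ?_ ?_ ?_ θ hδ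
  · apply continuous_matrix
    intro i j
    fin_cases i <;> fin_cases j <;> simp [rot] <;> fun_prop
  · intro s t
    apply fin2_ext <;>
      simp [rot, Matrix.mul_apply, Fin.sum_univ_two, Real.cos_add, Real.sin_add] <;> ring
  · apply fin2_ext <;> simp [rot, Matrix.one_apply]

lemma dec_dia_pos {δ : ℝ} (hδ : 0 < δ) {a d : ℝ} (ha : 0 < a) (hd : 0 < d) :
    Dec δ (!![a, 0; 0, d]) := by
  have e1 : Real.exp (Real.log a) = a := Real.exp_log ha
  have e2 : Real.exp (Real.log d) = d := Real.exp_log hd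
  have key : !![a, 0; 0, d] = dA (Real.log a) * dB (Real.log d) := by
    apply fin2_ext <;>
      simp [dA, dB, Matrix.mul_apply, Fin.sum_univ_two, e1, e2]
  rw [key]
  exact (dec_dA hδ _).mul (dec_dB hδ _)

lemma dec_dia {δ : ℝ} (hδ : 0 < δ) {a d : ℝ} (h : 0 < a * d) :
    Dec δ (!![a, 0; 0, d]) := by
  rcases lt_or_gt_of_ne (fun h0 : a = 0 => by simp [h0] at h) with ha | ha
  · have hd : d < 0 := by nlinarith
    have key : !![a, 0; 0, d] = rot π * !![-a, 0; 0, -d] := by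
      apply fin2_ext <;>
        simp [rot, Matrix.mul_apply, Fin.sum_univ_two]
    rw [key]
    exact (dec_rot hδ π).mul (dec_dia_pos hδ (by linarith) (by linarith))
  · have hd : 0 < d := by nlinarith
    exact dec_dia_pos hδ ha hd

lemma dec_aux {δ : ℝ} (hδ : 0 < δ) (S : M2) (hdet : 0 < S.det) (ha : S 0 0 ≠ 0) :
    Dec δ S := by
  set a := S 0 0 with ha'
  set b := S 0 1
  set c := S 1 0
  set d := S 1 1
  have hdet2 : S.det = a * d - b * c := Matrix.det_fin_two S
  have key : S = shL (c / a) * !![a, 0; 0, S.det / a] * shU (b / a) := by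
    apply fin2_ext <;>
      simp [shL, shU, Matrix.mul_apply, Fin.sum_univ_two, hdet2]
    · rfl
    all_goals field_simp
    all_goals ring
  have hdd : 0 < a * (S.det / a) := by
    rw [mul_div_cancel₀ _ ha]
    exact hdet
  rw [key]
  exact ((dec_shL hδ _).mul (dec_dia hδ hdd)).mul (dec_shU hδ _)

lemma dec_of_det_pos {δ : ℝ} (hδ : 0 < δ) (S : M2) (hdet : 0 < S.det) : Dec δ S := by
  by_cases ha : S 0 0 ≠ 0
  · exact dec_aux hδ S hdet ha
  · push_neg at ha
    set S' := shU (-1) * S with hS'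
    have hSS' : S = shU 1 * S' := by
      rw [hS', ← mul_assoc]
      have : shU 1 * shU (-1) = 1 := by
        apply fin2_ext <;> simp [shU, Matrix.mul_apply, Fin.sum_univ_two, Matrix.one_apply]
      rw [this, one_mul]
    have hdetS' : 0 < S'.det := by
      rw [hS', Matrix.det_mul]
      have : (shU (-1)).det = 1 := by simp [shU, Matrix.det_fin_two]
      rw [this, one_mul]
      exact hdet
    have hc : S 1 0 ≠ 0 := by
      intro hc
      rw [Matrix.det_fin_two, ha, hc] at hdet
      simp at hdet
    have ha' : S' 0 0 ≠ 0 := by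
      have : S' 0 0 = S 0 0 - S 1 0 := by
        rw [hS']
        simp [shU, Matrix.mul_apply, Fin.sum_univ_two]
        ring
      rw [this, ha, zero_sub]
      exact neg_ne_zero.2 hc
    rw [hSS']
    exact (dec_shU hδ 1).mul (dec_aux hδ S' hdetS' ha')

lemma prod_map_smul (r : ℝ) (l : List M2) :
    (l.map (r • ·)).prod = r ^ l.length • l.prod := by
  induction l with
  | nil => simp
  | cons a l ih =>
      simp only [List.map_cons, List.prod_cons, ih, List.length_cons]
      rw [smul_mul_smul_comm, pow_succ']

end Stmt6Aux

/-- Any orientation-preserving invertible matrix can be turned into a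
contracting homothety by multiplying (on either side) by matrices arbitrarily close to a given
contracting homothety `Q = lam • Id`. -/
theorem stmt6 (T : M2) (hT : IsUnit T) (hdet : 0 < T.det)
    (lam : ℝ) (hlam : lam ∈ Set.Ioo (0 : ℝ) 1) (ε : ℝ) (hε : 0 < ε) :
    ∃ h : ℕ, 1 ≤ h ∧ ∃ J L : Fin h → M2,
      (∀ i, IsUnit (J i) ∧ IsUnit (L i) ∧
        mnorm (J i - lam • (1 : M2)) < ε ∧ mnorm (L i - lam • (1 : M2)) < ε) ∧
      ∃ c c' : ℝ, c ∈ Set.Ioo (0 : ℝ) 1 ∧ c' ∈ Set.Ioo (0 : ℝ) 1 ∧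
        T * finProdRev J = c • (1 : M2) ∧ finProdRev L * T = c' • (1 : M2) := by
  obtain ⟨hlam0, hlam1⟩ := hlam
  have hδ : 0 < ε / lam := div_pos hε hlam0
  have hTdet : IsUnit T.det := (Matrix.isUnit_iff_isUnit_det T).1 hT
  have hinvdet : 0 < (T⁻¹).det := by
    rw [Matrix.det_nonsing_inv, Ring.inverse_eq_inv]
    exact inv_pos.2 hdet
  obtain ⟨l, hne, hmem, hprod⟩ := dec_of_det_pos hδ T⁻¹ hinvdet
  set lr : List M2 := (l.map (lam • ·)).reverse with hlr
  have hlen : lr.length = l.length := by simp [hlr]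
  have hlen1 : 1 ≤ lr.length := by
    rw [hlen]
    exact List.length_pos_iff.2 hne
  have key : finProdRev lr.get = lam ^ l.length • T⁻¹ := by
    unfold finProdRev
    rw [List.ofFn_get, hlr, List.reverse_reverse, prod_map_smul, hprod]
  have hlam_ne : lam ≠ 0 := ne_of_gt hlam0
  have hcIoo : lam ^ l.length ∈ Set.Ioo (0:ℝ) 1 := by
    constructor
    · exact pow_pos hlam0 _
    · exact pow_lt_one₀ hlam0.le hlam1 (List.length_pos_iff.2 hne).ne'
  refine ⟨lr.length, hlen1, lr.get, lr.get, ?_, lam ^ l.length, lam ^ l.length, hcIoo, hcIoo,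
    ?_, ?_⟩
  · intro i
    set x := lr.get i with hx
    have hmemi : x ∈ lr := by
      rw [hx]
      simpa using List.get_mem lr i.1 i.2
    rw [hlr, List.mem_reverse, List.mem_map] at hmemi
    obtain ⟨B, hBl, hBe⟩ := hmemi
    obtain ⟨hBu, hBn⟩ := hmem B hBl
    have hu : IsUnit x := by
      rw [← hBe]
      have h1 : IsUnit (lam • (1 : M2)) := by
        rw [Matrix.isUnit_iff_isUnit_det, Matrix.det_smul]
        simp [isUnit_iff_ne_zero, pow_ne_zero, hlam_ne]
      have : (lam • B : M2) = (lam • (1 : M2)) * B := by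
        rw [smul_mul_assoc, one_mul]
      rw [this]
      exact h1.mul hBu
    have hn : mnorm (x - lam • (1 : M2)) < ε := by
      rw [← hBe, ← smul_sub, mnorm_smul, abs_of_pos hlam0]
      calc lam * mnorm (B - 1) < lam * (ε / lam) :=
            mul_lt_mul_of_pos_left hBn hlam0
        _ = ε := by field_simp
    exact ⟨hu, hu, hn, hn⟩
  · rw [key, mul_smul_comm, Matrix.mul_nonsing_inv T hTdet]
  · rw [key, smul_mul_assoc, Matrix.nonsing_inv_mul T hTdet]
end

section
/- Let 0 < λ₂ < λ₁ < 1, let D := diag(λ₁, λ₂), let R(t) be the rotation matrix by angle t (with entries cos t, −sin t; sin t, cos t), and set M(t) := R(−t)·D·R(t)·D. Then: (1) for every t with 0 ≤ t < π/2, the matrix M(t) has two distinct real eigenvalues, both lying in the open interval (0,1); (2) M(π/2) = λ₁λ₂·Id, a contracting homothety. -/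
set_option maxHeartbeats 1000000

/-- The rotation matrix of angle `t`. -/
noncomputable def rotM (t : ℝ) : M2 := !![Real.cos t, -Real.sin t; Real.sin t, Real.cos t]

/-- The diagonal matrix `diag (a, b)`. -/
def diagM (a b : ℝ) : M2 := !![a, 0; 0, b]

open Polynomial in
lemma my_charpoly_fin_two (A : Matrix (Fin 2) (Fin 2) ℝ) :
    A.charpoly = X ^ 2 - C A.trace * X + C A.det := by
  rw [Matrix.charpoly, Matrix.det_fin_two, Matrix.det_fin_two, Matrix.trace_fin_two]
  simp [Matrix.charmatrix_apply]
  ring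

/-- For `0 < λ₂ < λ₁ < 1`, the matrix `M(t) = R(-t)·D·R(t)·D` has two distinct
real eigenvalues in `(0,1)` for `0 ≤ t < π/2`, and is the contracting homothety `λ₁λ₂·Id`
at `t = π/2`. -/
theorem stmt7 (l1 l2 : ℝ) (h2 : 0 < l2) (h21 : l2 < l1) (h1 : l1 < 1) :
    (∀ t : ℝ, 0 ≤ t → t < Real.pi / 2 →
      ∃ μ₁ μ₂ : ℝ, μ₁ ≠ μ₂ ∧ μ₁ ∈ Set.Ioo (0 : ℝ) 1 ∧ μ₂ ∈ Set.Ioo (0 : ℝ) 1 ∧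
        (rotM (-t) * diagM l1 l2 * rotM t * diagM l1 l2).charpoly
          = (Polynomial.X - Polynomial.C μ₁) * (Polynomial.X - Polynomial.C μ₂)) ∧
    rotM (-(Real.pi / 2)) * diagM l1 l2 * rotM (Real.pi / 2) * diagM l1 l2
      = (l1 * l2) • (1 : M2) := by
  constructor
  · intro t ht0 ht
    have hc : 0 < Real.cos t := by
      apply Real.cos_pos_of_mem_Ioo
      exact ⟨by have := Real.pi_pos; linarith, ht⟩
    set c := Real.cos t with hc_def
    set s := Real.sin t with hs_def
    have hcs : s ^ 2 + c ^ 2 = 1 := Real.sin_sq_add_cos_sq t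
    have hc1 : c ≤ 1 := Real.cos_le_one t
    have h12 : 0 < l1 - l2 := by linarith
    have ha : 0 < l1 * l2 := mul_pos (h2.trans h21) h2
    have hcsq : 0 < c ^ 2 * (l1 - l2) ^ 2 := mul_pos (pow_pos hc 2) (pow_pos h12 2)
    set tr : ℝ := c ^ 2 * (l1 - l2) ^ 2 + 2 * l1 * l2 with htr_def
    set d : ℝ := tr ^ 2 - 4 * (l1 * l2) ^ 2 with hd_def
    have hd : d = c ^ 2 * (l1 - l2) ^ 2 * (c ^ 2 * (l1 - l2) ^ 2 + 4 * l1 * l2) := by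
      rw [hd_def, htr_def]; ring
    have hd0 : 0 < d := by rw [hd]; nlinarith
    set q := Real.sqrt d with hq_def
    have hq2 : q ^ 2 = d := Real.sq_sqrt hd0.le
    have hq2' : q ^ 2 = tr ^ 2 - 4 * (l1 * l2) ^ 2 := by rw [hq2, hd_def]
    have hq0 : 0 < q := Real.sqrt_pos.2 hd0
    have htr0 : 0 < tr := by rw [htr_def]; nlinarith
    have hqtr : q < tr := by nlinarith [hq2', hq0, htr0, ha]
    have htr2 : tr < 1 + (l1 * l2) ^ 2 := by
      have h' : tr ≤ (l1 - l2) ^ 2 + 2 * l1 * l2 := by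
        rw [htr_def]; nlinarith [sq_nonneg (l1 - l2)]
      nlinarith [mul_pos (sub_pos.2 (show l1 ^ 2 < 1 by nlinarith))
        (sub_pos.2 (show l2 ^ 2 < 1 by nlinarith))]
    have h2tr : 0 < 2 - tr := by nlinarith [sq_nonneg (l1 * l2 - 1)]
    have hqlt : q ^ 2 < (2 - tr) ^ 2 := by rw [hq2']; nlinarith
    have hsum2 : tr + q < 2 := by nlinarith [hqlt, h2tr, hq0]
    refine ⟨(tr + q) / 2, (tr - q) / 2, by intro h; nlinarith, ⟨by linarith, by linarith⟩,
      ⟨by linarith, by linarith⟩, ?_⟩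
    have hM : rotM (-t) * diagM l1 l2 * rotM t * diagM l1 l2 =
        !![l1 * (c ^ 2 * l1 + s ^ 2 * l2), l2 * (c * s * (l2 - l1));
           l1 * (c * s * (l2 - l1)), l2 * (s ^ 2 * l1 + c ^ 2 * l2)] := by
      simp [rotM, diagM, Matrix.mul_fin_two, ← hc_def, ← hs_def]
      ring_nf
      simp
    rw [hM, my_charpoly_fin_two]
    have htrace : (!![l1 * (c ^ 2 * l1 + s ^ 2 * l2), l2 * (c * s * (l2 - l1));
           l1 * (c * s * (l2 - l1)), l2 * (s ^ 2 * l1 + c ^ 2 * l2)]).trace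
        = (tr + q) / 2 + (tr - q) / 2 := by
      simp only [Matrix.trace_fin_two_of]
      rw [htr_def]
      linear_combination (2 * l1 * l2) * hcs
    have hdet : (!![l1 * (c ^ 2 * l1 + s ^ 2 * l2), l2 * (c * s * (l2 - l1));
           l1 * (c * s * (l2 - l1)), l2 * (s ^ 2 * l1 + c ^ 2 * l2)]).det
        = (tr + q) / 2 * ((tr - q) / 2) := by
      rw [Matrix.det_fin_two_of,
        show (tr + q) / 2 * ((tr - q) / 2) = (tr ^ 2 - q ^ 2) / 4 by ring, hq2', htr_def]
      linear_combination ((l1 * l2) ^ 2 * (c ^ 2 + s ^ 2 + 1)) * hcs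
    rw [htrace, hdet, map_add, map_mul]
    ring
  · ext i j
    fin_cases i <;> fin_cases j <;>
      simp [rotM, diagM, Matrix.mul_fin_two, Matrix.one_fin_two] <;> ring
end

section
/- For every C > 1 and every χ < 0 there exists α > 0 with the following property. Let n ≥ 1 and let A_0, …, A_{n−1} ∈ GL(2,ℝ) satisfy ‖A_i‖ < C and ‖A_i⁻¹‖ < C for every i. Suppose the product M := A_{n−1}···A_0 is diagonalizable over ℝ with eigenvalues μ₁, μ₂ satisfying (1/n)·log|μ₂| < χ and (1/n)·log|μ₁| > χ/2. Then there exist an index i ∈ {0, …, n−1} and a matrix P ∈ SL(2,ℝ) with ‖P‖ < α such that P⁻¹·M_i·P is a diagonal matrix, where M_i := (A_{i−1}···A_0)·M·(A_{i−1}···A_0)⁻¹ is the return map of the cocycle based at index i (with M_0 := M). -/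
/-- The product `A (j-1) * ⋯ * A 0`. -/
def prodRange (A : ℕ → M2) (j : ℕ) : M2 := (((List.range j).map A).reverse).prod

/-! ### Auxiliary lemmas -/

lemma mact_apply (A : M2) (x : E2) (k : Fin 2) :
    mact A x k = A k 0 * x 0 + A k 1 * x 1 := by
  show (Matrix.toEuclideanCLM (𝕜 := ℝ) A x) k = _
  have := Matrix.ofLp_toEuclideanCLM (𝕜 := ℝ) A x
  have h2 := congrFun this k
  simp [Matrix.mulVec, dotProduct, Fin.sum_univ_two] at h2 ⊢

lemma mact_mul (A B : M2) (x : E2) : mact (A * B) x = mact A (mact B x) := by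
  simp [mact, mCLM, map_mul]

lemma mact_one (x : E2) : mact 1 x = x := by
  simp [mact, mCLM, map_one]

lemma mact_smul (A : M2) (c : ℝ) (x : E2) : mact A (c • x) = c • mact A x := by
  simp [mact]

lemma mact_add (A : M2) (x y : E2) : mact A (x + y) = mact A x + mact A y := by
  simp [mact, map_add]

lemma norm_mact_le (A : M2) (x : E2) : ‖mact A x‖ ≤ mnorm A * ‖x‖ :=
  (mCLM A).le_opNorm x

lemma mnorm_nonneg (A : M2) : 0 ≤ mnorm A := norm_nonneg _

lemma mnorm_mul_le (A B : M2) : mnorm (A * B) ≤ mnorm A * mnorm B := by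
  simp only [mnorm, mCLM, map_mul]
  exact norm_mul_le _ _

lemma e2norm (x : E2) : ‖x‖ = Real.sqrt (x 0 ^ 2 + x 1 ^ 2) := by
  rw [EuclideanSpace.norm_eq]
  simp [Fin.sum_univ_two, sq_abs]

lemma e2norm_sq (x : E2) : ‖x‖ ^ 2 = x 0 ^ 2 + x 1 ^ 2 := by
  rw [e2norm, Real.sq_sqrt]; positivity

lemma e2_sub_apply (x y : E2) (k : Fin 2) : (x - y) k = x k - y k := rfl
lemma e2_add_apply (x y : E2) (k : Fin 2) : (x + y) k = x k + y k := rfl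
lemma e2_smul_apply (c : ℝ) (x : E2) (k : Fin 2) : (c • x) k = c * x k := rfl

lemma e2ext {x y : E2} (h0 : x 0 = y 0) (h1 : x 1 = y 1) : x = y := by
  apply PiLp.ext; intro k
  fin_cases k <;> assumption

lemma mnorm_le_frob (A : M2) :
    mnorm A ≤ Real.sqrt (A 0 0 ^ 2 + A 0 1 ^ 2 + A 1 0 ^ 2 + A 1 1 ^ 2) := by
  apply ContinuousLinearMap.opNorm_le_bound _ (Real.sqrt_nonneg _)
  intro x
  have h0 : mCLM A x 0 = A 0 0 * x 0 + A 0 1 * x 1 := mact_apply A x 0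
  have h1 : mCLM A x 1 = A 1 0 * x 0 + A 1 1 * x 1 := mact_apply A x 1
  have hsq : ‖mCLM A x‖ ^ 2 ≤
      (Real.sqrt (A 0 0 ^ 2 + A 0 1 ^ 2 + A 1 0 ^ 2 + A 1 1 ^ 2) * ‖x‖) ^ 2 := by
    rw [e2norm_sq, h0, h1, mul_pow, Real.sq_sqrt (by positivity), e2norm_sq]
    nlinarith [sq_nonneg (A 0 0 * x 1 - A 0 1 * x 0), sq_nonneg (A 1 0 * x 1 - A 1 1 * x 0),
      sq_nonneg (x 0), sq_nonneg (x 1), sq_nonneg (A 0 0), sq_nonneg (A 1 1)]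
  have hn : 0 ≤ Real.sqrt (A 0 0 ^ 2 + A 0 1 ^ 2 + A 1 0 ^ 2 + A 1 1 ^ 2) * ‖x‖ := by
    positivity
  nlinarith [norm_nonneg (mCLM A x)]

/-- For unit vectors, `min ‖u-z‖ ‖u+z‖ ≤ 2 |det [u z]|`. -/
lemma min_le_det (u z : E2) (hu : ‖u‖ = 1) (hz : ‖z‖ = 1) :
    min ‖u - z‖ ‖u + z‖ ≤ 2 * |u 0 * z 1 - u 1 * z 0| := by
  have hu2 : u 0 ^ 2 + u 1 ^ 2 = 1 := by rw [← e2norm_sq, hu]; norm_num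
  have hz2 : z 0 ^ 2 + z 1 ^ 2 = 1 := by rw [← e2norm_sq, hz]; norm_num
  set c := u 0 * z 0 + u 1 * z 1 with hc
  set d := u 0 * z 1 - u 1 * z 0 with hd
  have hlag : c ^ 2 + d ^ 2 = 1 := by rw [hc, hd]; nlinarith
  have hsub : ‖u - z‖ ^ 2 = 2 - 2 * c := by
    rw [e2norm_sq, e2_sub_apply, e2_sub_apply]; nlinarith
  have hadd : ‖u + z‖ ^ 2 = 2 + 2 * c := by
    rw [e2norm_sq, e2_add_apply, e2_add_apply]; nlinarith
  rcases le_or_gt 0 c with h | h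
  · apply (min_le_left _ _).trans
    have h1 : ‖u - z‖ ^ 2 ≤ (2 * |d|) ^ 2 := by
      rw [hsub, mul_pow, sq_abs]; nlinarith
    nlinarith [norm_nonneg (u - z), abs_nonneg d]
  · apply (min_le_right _ _).trans
    have h1 : ‖u + z‖ ^ 2 ≤ (2 * |d|) ^ 2 := by
      rw [hadd, mul_pow, sq_abs]; nlinarith
    nlinarith [norm_nonneg (u + z), abs_nonneg d]

lemma mact_norm_pos (A : M2) (hA : IsUnit A) (C : ℝ) (hC : 0 < C)
    (hni : mnorm A⁻¹ < C) (z : E2) (hz : ‖z‖ = 1) : 1 / C ≤ ‖mact A z‖ := by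
  have hinv : A⁻¹ * A = 1 := Matrix.nonsing_inv_mul A ((Matrix.isUnit_iff_isUnit_det A).mp hA)
  have h1 : z = mact A⁻¹ (mact A z) := by rw [← mact_mul, hinv, mact_one]
  have h2 : (1:ℝ) ≤ mnorm A⁻¹ * ‖mact A z‖ := by
    calc (1:ℝ) = ‖z‖ := hz.symm
    _ = ‖mact A⁻¹ (mact A z)‖ := by rw [← h1]
    _ ≤ mnorm A⁻¹ * ‖mact A z‖ := norm_mact_le _ _
  rw [div_le_iff₀ hC]
  nlinarith [norm_nonneg (mact A z), mnorm_nonneg A⁻¹]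

lemma step_bound (A : M2) (C : ℝ) (hC : 1 < C) (hA : IsUnit A)
    (hn : mnorm A < C) (hni : mnorm A⁻¹ < C) (u z : E2) (hu : ‖u‖ = 1) (hz : ‖z‖ = 1) :
    Real.log ‖mact A u‖ - Real.log ‖mact A z‖ ≤
      2 * C ^ 2 * |u 0 * z 1 - u 1 * z 0| := by
  set d := |u 0 * z 1 - u 1 * z 0| with hd
  have hd0 : 0 ≤ d := abs_nonneg _
  have hC0 : (0:ℝ) < C := by linarith
  have hAz : 1 / C ≤ ‖mact A z‖ := mact_norm_pos A hA C hC0 hni z hz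
  have hAz0 : 0 < ‖mact A z‖ := lt_of_lt_of_le (by positivity) hAz
  have hAu : 1 / C ≤ ‖mact A u‖ := mact_norm_pos A hA C hC0 hni u hu
  have hAu0 : 0 < ‖mact A u‖ := lt_of_lt_of_le (by positivity) hAu
  have hkey : ‖mact A u‖ ≤ ‖mact A z‖ + C * (2 * d) := by
    rcases min_le_det u z hu hz with hmin
    rcases le_total ‖u - z‖ ‖u + z‖ with hle | hle
    · have h1 : ‖u - z‖ ≤ 2 * d := by rw [min_eq_left hle] at hmin; exact hmin
      have h2 : mact A u = mact A z + mact A (u - z) := by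
        have harg : z + (u - z) = u := by abel
        rw [← mact_add, harg]
      calc ‖mact A u‖ ≤ ‖mact A z‖ + ‖mact A (u - z)‖ := by rw [h2]; exact norm_add_le _ _
      _ ≤ ‖mact A z‖ + mnorm A * ‖u - z‖ := by linarith [norm_mact_le A (u - z)]
      _ ≤ ‖mact A z‖ + C * (2 * d) := by
          have := norm_nonneg (u - z)
          nlinarith [mnorm_nonneg A]
    · have h1 : ‖u + z‖ ≤ 2 * d := by rw [min_eq_right hle] at hmin; exact hmin
      have h2 : mact A u = -(mact A z) + mact A (u + z) := by
        have harg : -z + (u + z) = u := by abel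
        have : mact A u = mact A (-z + (u + z)) := by rw [harg]
        rw [this, mact_add]
        congr 1
        simp [mact, map_neg]
      calc ‖mact A u‖ ≤ ‖-(mact A z)‖ + ‖mact A (u + z)‖ := by rw [h2]; exact norm_add_le _ _
      _ = ‖mact A z‖ + ‖mact A (u + z)‖ := by rw [norm_neg]
      _ ≤ ‖mact A z‖ + mnorm A * ‖u + z‖ := by linarith [norm_mact_le A (u + z)]
      _ ≤ ‖mact A z‖ + C * (2 * d) := by
          have := norm_nonneg (u + z)
          nlinarith [mnorm_nonneg A]
  have hratio : ‖mact A u‖ ≤ ‖mact A z‖ * (1 + 2 * C ^ 2 * d) := by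
    have h4 : 1 ≤ C * ‖mact A z‖ := by
      rw [div_le_iff₀ hC0] at hAz; linarith
    have : C * (2 * d) ≤ ‖mact A z‖ * (2 * C ^ 2 * d) := by
      nlinarith [mul_le_mul_of_nonneg_left h4 (by positivity : (0:ℝ) ≤ 2 * C * d)]
    nlinarith
  have hpos : (0:ℝ) < 1 + 2 * C ^ 2 * d := by positivity
  calc Real.log ‖mact A u‖ - Real.log ‖mact A z‖
      ≤ Real.log (‖mact A z‖ * (1 + 2 * C ^ 2 * d)) - Real.log ‖mact A z‖ := by
        have := Real.log_le_log hAu0 hratio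
        linarith
    _ = Real.log (1 + 2 * C ^ 2 * d) := by
        rw [Real.log_mul hAz0.ne' hpos.ne']; ring
    _ ≤ 2 * C ^ 2 * d := by
        have := Real.log_le_sub_one_of_pos hpos
        linarith

lemma prodRange_zero (A : ℕ → M2) : prodRange A 0 = 1 := by
  simp [prodRange]

lemma prodRange_succ (A : ℕ → M2) (i : ℕ) :
    prodRange A (i + 1) = A i * prodRange A i := by
  simp [prodRange, List.range_succ]

lemma prodRange_isUnit (A : ℕ → M2) (i : ℕ) (h : ∀ j < i, IsUnit (A j)) :
    IsUnit (prodRange A i) := by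
  induction i with
  | zero => simp [prodRange_zero]
  | succ k ih =>
      rw [prodRange_succ]
      exact (h k (Nat.lt_succ_self k)).mul (ih fun j hj => h j (hj.trans (Nat.lt_succ_self k)))

lemma mact_diag_e1 (a b : ℝ) :
    mact (diagM a b) (EuclideanSpace.single 0 1) = a • EuclideanSpace.single (0 : Fin 2) (1:ℝ) := by
  apply e2ext <;>
    simp [mact_apply, diagM, EuclideanSpace.single_apply, e2_smul_apply]

lemma mact_diag_e2 (a b : ℝ) :
    mact (diagM a b) (EuclideanSpace.single 1 1) = b • EuclideanSpace.single (1 : Fin 2) (1:ℝ) := by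
  apply e2ext <;>
    simp [mact_apply, diagM, EuclideanSpace.single_apply, e2_smul_apply]

lemma diagM_mul (a b c d : ℝ) : diagM a b * diagM c d = diagM (a * c) (b * d) := by
  ext k j
  fin_cases k <;> fin_cases j <;>
    simp [diagM, Matrix.mul_apply, Fin.sum_univ_two]

lemma diagM_det (a b : ℝ) : (diagM a b).det = a * b := by
  simp [diagM, Matrix.det_fin_two_of]

lemma mact_ne_zero (B : M2) (hB : IsUnit B) {v : E2} (hv : v ≠ 0) : mact B v ≠ 0 := by
  intro h
  apply hv
  have hinv : B⁻¹ * B = 1 := Matrix.nonsing_inv_mul B ((Matrix.isUnit_iff_isUnit_det B).mp hB)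
  calc v = mact (B⁻¹ * B) v := by rw [hinv, mact_one]
  _ = mact B⁻¹ (mact B v) := mact_mul _ _ _
  _ = 0 := by rw [h]; simp [mact, map_zero]

set_option maxHeartbeats 1000000

/-- Along a periodic orbit of bounded diagonalizable cocycles whose two
Lyapunov exponents are separated by `χ < χ/2`, at some point of the orbit the return map is
diagonalized by a change of basis of determinant one with norm bounded by a constant `α`
depending only on the bound `C` and on `χ`. -/
theorem stmt10 (C χ : ℝ) (hC : 1 < C) (hχ : χ < 0) :
    ∃ α > (0 : ℝ), ∀ n : ℕ, 1 ≤ n → ∀ A : ℕ → M2,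
      (∀ i < n, IsUnit (A i) ∧ mnorm (A i) < C ∧ mnorm (Ring.inverse (A i)) < C) →
      ∀ (μ₁ μ₂ : ℝ) (S : M2), IsUnit S →
        prodRange A n = S * diagM μ₁ μ₂ * S⁻¹ →
        (1 / n : ℝ) * Real.log |μ₂| < χ →
        χ / 2 < (1 / n : ℝ) * Real.log |μ₁| →
        ∃ i < n, ∃ P : M2, P.det = 1 ∧ mnorm P < α ∧
          ∃ d₁ d₂ : ℝ,
            P⁻¹ * (prodRange A i * prodRange A n * (prodRange A i)⁻¹) * P = diagM d₁ d₂ := by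
  have hC0 : (0:ℝ) < C := by linarith
  have hχ0 : (0:ℝ) < -χ := by linarith
  set ε : ℝ := (-χ) / (8 * C ^ 2) with hεdef
  have hε0 : 0 < ε := by positivity
  refine ⟨2 / Real.sqrt ε + 1, by positivity, ?_⟩
  intro n hn A hA μ₁ μ₂ S hS hdecomp hμ2 hμ1
  have hn0 : (0:ℝ) < (n:ℝ) := by exact_mod_cast hn
  set M : M2 := prodRange A n with hMdef
  have hMunit : IsUnit M := prodRange_isUnit A n (fun j hj => (hA j hj).1)
  have hSdet : IsUnit S.det := (Matrix.isUnit_iff_isUnit_det S).mp hS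
  have hSinv : S⁻¹ * S = 1 := Matrix.nonsing_inv_mul S hSdet
  have hMS : M * S = S * diagM μ₁ μ₂ := by
    rw [hdecomp, mul_assoc, hSinv, mul_one]
  have hμ12 : μ₁ * μ₂ ≠ 0 := by
    intro h
    have hdet0 : M.det = 0 := by
      rw [hdecomp]
      rw [Matrix.det_mul, Matrix.det_mul, diagM_det, h]
      ring
    exact (((Matrix.isUnit_iff_isUnit_det M).mp hMunit).ne_zero) hdet0
  have hμ1ne : μ₁ ≠ 0 := fun h => hμ12 (by rw [h, zero_mul])
  have hμ2ne : μ₂ ≠ 0 := fun h => hμ12 (by rw [h, mul_zero])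
  set v0 : E2 := mact S (EuclideanSpace.single 0 1) with hv0def
  set w0 : E2 := mact S (EuclideanSpace.single 1 1) with hw0def
  have hv0 : mact M v0 = μ₁ • v0 := by
    rw [hv0def, ← mact_mul, hMS, mact_mul, mact_diag_e1, mact_smul]
  have hw0 : mact M w0 = μ₂ • w0 := by
    rw [hw0def, ← mact_mul, hMS, mact_mul, mact_diag_e2, mact_smul]
  have hv0ne : v0 ≠ 0 := by
    apply mact_ne_zero S hS
    intro h
    have h0 : EuclideanSpace.single (0 : Fin 2) (1:ℝ) 0 = (0 : E2) 0 := by rw [h]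
    simp [EuclideanSpace.single_apply] at h0
  have hw0ne : w0 ≠ 0 := by
    apply mact_ne_zero S hS
    intro h
    have h0 : EuclideanSpace.single (1 : Fin 2) (1:ℝ) 1 = (0 : E2) 1 := by rw [h]
    simp [EuclideanSpace.single_apply] at h0
  set x : ℕ → E2 := fun i => mact (prodRange A i) v0 with hxdef
  set y : ℕ → E2 := fun i => mact (prodRange A i) w0 with hydef
  have hxne : ∀ i ≤ n, x i ≠ 0 := fun i hi =>
    mact_ne_zero _ (prodRange_isUnit A i (fun j hj => (hA j (lt_of_lt_of_le hj hi)).1)) hv0ne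
  have hyne : ∀ i ≤ n, y i ≠ 0 := fun i hi =>
    mact_ne_zero _ (prodRange_isUnit A i (fun j hj => (hA j (lt_of_lt_of_le hj hi)).1)) hw0ne
  have hxpos : ∀ i ≤ n, 0 < ‖x i‖ := fun i hi => norm_pos_iff.mpr (hxne i hi)
  have hypos : ∀ i ≤ n, 0 < ‖y i‖ := fun i hi => norm_pos_iff.mpr (hyne i hi)
  set u : ℕ → E2 := fun i => (‖x i‖⁻¹ : ℝ) • x i with hudef
  set z : ℕ → E2 := fun i => (‖y i‖⁻¹ : ℝ) • y i with hzdef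
  have hunorm : ∀ i ≤ n, ‖u i‖ = 1 := fun i hi => norm_smul_inv_norm (hxne i hi)
  have hznorm : ∀ i ≤ n, ‖z i‖ = 1 := fun i hi => norm_smul_inv_norm (hyne i hi)
  set d : ℕ → ℝ := fun i => |u i 0 * z i 1 - u i 1 * z i 0| with hddef
  have hxsucc : ∀ i, x (i + 1) = mact (A i) (x i) := by
    intro i
    rw [hxdef]
    simp only [prodRange_succ, mact_mul]
  have hysucc : ∀ i, y (i + 1) = mact (A i) (y i) := by
    intro i
    rw [hydef]
    simp only [prodRange_succ, mact_mul]
  by_cases hcase : ∃ i, i < n ∧ ε ≤ d i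
  · -- the good index exists: construct the conjugating matrix
    obtain ⟨i, hin, hdi⟩ := hcase
    refine ⟨i, hin, ?_⟩
    have hile : i ≤ n := le_of_lt hin
    set B : M2 := prodRange A i with hBdef
    have hBunit : IsUnit B := prodRange_isUnit A i (fun j hj => (hA j (hj.trans hin)).1)
    have hBinv : B⁻¹ * B = 1 := Matrix.nonsing_inv_mul B ((Matrix.isUnit_iff_isUnit_det B).mp hBunit)
    set Mi : M2 := B * M * B⁻¹ with hMidef
    have hMix : mact Mi (x i) = μ₁ • x i := by
      have hxi : x i = mact B v0 := by rw [hxdef]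
      have h1 : B * M * B⁻¹ * B = B * M := by rw [mul_assoc, hBinv, mul_one]
      rw [hMidef, hxi, ← mact_mul, h1, mact_mul, hv0, mact_smul]
    have hMiy : mact Mi (y i) = μ₂ • y i := by
      have hyi : y i = mact B w0 := by rw [hydef]
      have h1 : B * M * B⁻¹ * B = B * M := by rw [mul_assoc, hBinv, mul_one]
      rw [hMidef, hyi, ← mact_mul, h1, mact_mul, hw0, mact_smul]
    have hMiu : mact Mi (u i) = μ₁ • u i := by
      rw [hudef]
      simp only [mact_smul, hMix]
      rw [smul_comm]
    have hMiz : mact Mi (z i) = μ₂ • z i := by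
      rw [hzdef]
      simp only [mact_smul, hMiy]
      rw [smul_comm]
    have hcu : ∀ k : Fin 2, Mi k 0 * u i 0 + Mi k 1 * u i 1 = μ₁ * u i k := by
      intro k
      have h1 : mact Mi (u i) k = (μ₁ • u i) k := by rw [hMiu]
      rwa [mact_apply, e2_smul_apply] at h1
    have hcz : ∀ k : Fin 2, Mi k 0 * z i 0 + Mi k 1 * z i 1 = μ₂ * z i k := by
      intro k
      have h1 : mact Mi (z i) k = (μ₂ • z i) k := by rw [hMiz]
      rwa [mact_apply, e2_smul_apply] at h1
    set Q : M2 := !![u i 0, z i 0; u i 1, z i 1] with hQdef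
    have hMiQ : Mi * Q = Q * diagM μ₁ μ₂ := by
      ext k j
      rw [Matrix.mul_apply, Matrix.mul_apply, Fin.sum_univ_two, Fin.sum_univ_two]
      fin_cases k <;> fin_cases j <;>
        simp [hQdef, diagM] <;>
        [linarith [hcu 0]; linarith [hcz 0]; linarith [hcu 1]; linarith [hcz 1]]
    set D : ℝ := u i 0 * z i 1 - u i 1 * z i 0 with hDdef
    have hDabs : |D| = d i := by rw [hddef, hDdef]
    have hεD : ε ≤ |D| := by rw [hDabs]; exact hdi
    have hDpos : 0 < |D| := lt_of_lt_of_le hε0 hεD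
    have hDne : D ≠ 0 := abs_pos.mp hDpos
    set s : ℝ := Real.sqrt |D| with hsdef
    have hspos : 0 < s := Real.sqrt_pos.mpr hDpos
    have hss : s * s = |D| := Real.mul_self_sqrt (abs_nonneg D)
    set a : ℝ := s⁻¹ with hadef
    set b : ℝ := D * |D|⁻¹ * s⁻¹ with hbdef
    have hab : a * b = D⁻¹ := by
      rw [hadef, hbdef]
      rw [show s⁻¹ * (D * |D|⁻¹ * s⁻¹) = D * (|D|⁻¹ * (s * s)⁻¹) by rw [mul_inv]; ring, hss]
      rw [← mul_inv, abs_mul_abs_self]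
      field_simp
    set P : M2 := Q * diagM a b with hPdef
    have hQdet : Q.det = D := by
      rw [hQdef, Matrix.det_fin_two_of, hDdef]
      ring
    have hPdet : P.det = 1 := by
      rw [hPdef, Matrix.det_mul, hQdet, diagM_det, hab, mul_inv_cancel₀ hDne]
    -- norm bound
    have hu2 : u i 0 ^ 2 + u i 1 ^ 2 = 1 := by
      rw [← e2norm_sq, hunorm i hile]; norm_num
    have hz2 : z i 0 ^ 2 + z i 1 ^ 2 = 1 := by
      rw [← e2norm_sq, hznorm i hile]; norm_num
    have hQ00 : Q 0 0 = u i 0 := rfl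
    have hQ01 : Q 0 1 = z i 0 := rfl
    have hQ10 : Q 1 0 = u i 1 := rfl
    have hQ11 : Q 1 1 = z i 1 := rfl
    have hQnorm : mnorm Q ≤ Real.sqrt 2 := by
      refine (mnorm_le_frob Q).trans ?_
      apply Real.sqrt_le_sqrt
      rw [hQ00, hQ01, hQ10, hQ11]
      linarith [hu2, hz2]
    have hb2 : b ^ 2 = |D|⁻¹ := by
      rw [hbdef]
      have : (D * |D|⁻¹ * s⁻¹) ^ 2 = D ^ 2 * (|D|⁻¹) ^ 2 * ((s * s)⁻¹) := by
        rw [mul_inv]; ring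
      rw [this, hss]
      have hD2 : D ^ 2 = |D| * |D| := by rw [abs_mul_abs_self]; ring
      rw [hD2]
      field_simp
    have ha2 : a ^ 2 = |D|⁻¹ := by
      rw [hadef]
      have : (s⁻¹) ^ 2 = (s * s)⁻¹ := by rw [mul_inv]; ring
      rw [this, hss]
    have hdiagnorm : mnorm (diagM a b) ≤ Real.sqrt (2 / |D|) := by
      refine (mnorm_le_frob (diagM a b)).trans ?_
      apply Real.sqrt_le_sqrt
      have h00 : diagM a b 0 0 = a := rfl
      have h01 : diagM a b 0 1 = 0 := rfl
      have h10 : diagM a b 1 0 = 0 := rfl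
      have h11 : diagM a b 1 1 = b := rfl
      rw [h00, h01, h10, h11, ha2, hb2, div_eq_mul_inv]
      nlinarith [inv_nonneg.mpr (abs_nonneg D)]
    have hPnorm : mnorm P < 2 / Real.sqrt ε + 1 := by
      have h1 : mnorm P ≤ mnorm Q * mnorm (diagM a b) := by rw [hPdef]; exact mnorm_mul_le _ _
      have h2 : mnorm Q * mnorm (diagM a b) ≤ Real.sqrt 2 * Real.sqrt (2 / |D|) := by
        apply mul_le_mul hQnorm hdiagnorm (mnorm_nonneg _) (Real.sqrt_nonneg 2)
      have h3 : Real.sqrt 2 * Real.sqrt (2 / |D|) = Real.sqrt (4 / |D|) := by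
        rw [← Real.sqrt_mul (by norm_num : (0:ℝ) ≤ 2)]
        congr 1
        field_simp
        norm_num
      have h4 : Real.sqrt (4 / |D|) ≤ Real.sqrt (4 / ε) := by
        apply Real.sqrt_le_sqrt
        gcongr
      have h5 : Real.sqrt (4 / ε) = 2 / Real.sqrt ε := by
        rw [show (4:ℝ) = 2 ^ 2 by norm_num, Real.sqrt_div (by positivity), Real.sqrt_sq (by norm_num : (0:ℝ) ≤ 2)]
      linarith
    refine ⟨P, hPdet, hPnorm, μ₁, μ₂, ?_⟩
    have hMiP : Mi * P = P * diagM μ₁ μ₂ := by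
      rw [hPdef]
      calc Mi * (Q * diagM a b) = Mi * Q * diagM a b := (mul_assoc _ _ _).symm
      _ = Q * diagM μ₁ μ₂ * diagM a b := by rw [hMiQ]
      _ = Q * (diagM μ₁ μ₂ * diagM a b) := mul_assoc _ _ _
      _ = Q * (diagM a b * diagM μ₁ μ₂) := by
          rw [diagM_mul, diagM_mul, mul_comm μ₁ a, mul_comm μ₂ b]
      _ = Q * diagM a b * diagM μ₁ μ₂ := (mul_assoc _ _ _).symm
    have hPdetunit : IsUnit P.det := by rw [hPdet]; exact isUnit_one
    have hPinv : P⁻¹ * P = 1 := Matrix.nonsing_inv_mul P hPdetunit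
    calc P⁻¹ * Mi * P = P⁻¹ * (Mi * P) := mul_assoc _ _ _
    _ = P⁻¹ * (P * diagM μ₁ μ₂) := by rw [hMiP]
    _ = P⁻¹ * P * diagM μ₁ μ₂ := (mul_assoc _ _ _).symm
    _ = diagM μ₁ μ₂ := by rw [hPinv, one_mul]
  · -- all angles are small: contradiction with the gap between the exponents
    exfalso
    push_neg at hcase
    set f : ℕ → ℝ := fun i => Real.log ‖x i‖ - Real.log ‖y i‖ with hfdef
    have htel : ∑ i ∈ Finset.range n, (f (i + 1) - f i) = f n - f 0 := Finset.sum_range_sub f n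
    have hstep : ∀ i ∈ Finset.range n, f (i + 1) - f i ≤ 2 * C ^ 2 * d i := by
      intro i hi
      rw [Finset.mem_range] at hi
      obtain ⟨hAiu, hAin, hAiinv⟩ := hA i hi
      rw [← Matrix.nonsing_inv_eq_ringInverse] at hAiinv
      have hxipos := hxpos i hi.le
      have hyipos := hypos i hi.le
      have hxi : x i = ‖x i‖ • u i := by
        rw [hudef]
        simp only [smul_inv_smul₀ hxipos.ne']
      have hyi : y i = ‖y i‖ • z i := by
        rw [hzdef]
        simp only [smul_inv_smul₀ hyipos.ne']
      have hAupos : 0 < ‖mact (A i) (u i)‖ :=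
        lt_of_lt_of_le (by positivity) (mact_norm_pos (A i) hAiu C hC0 hAiinv (u i) (hunorm i hi.le))
      have hAzpos : 0 < ‖mact (A i) (z i)‖ :=
        lt_of_lt_of_le (by positivity) (mact_norm_pos (A i) hAiu C hC0 hAiinv (z i) (hznorm i hi.le))
      have hxnorm1 : ‖x (i + 1)‖ = ‖x i‖ * ‖mact (A i) (u i)‖ := by
        conv_lhs => rw [hxsucc i, hxi]
        rw [mact_smul, norm_smul, Real.norm_eq_abs, abs_of_pos hxipos]
      have hxlog : Real.log ‖x (i + 1)‖ = Real.log ‖x i‖ + Real.log ‖mact (A i) (u i)‖ := by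
        rw [hxnorm1, Real.log_mul hxipos.ne' hAupos.ne']
      have hynorm1 : ‖y (i + 1)‖ = ‖y i‖ * ‖mact (A i) (z i)‖ := by
        conv_lhs => rw [hysucc i, hyi]
        rw [mact_smul, norm_smul, Real.norm_eq_abs, abs_of_pos hyipos]
      have hylog : Real.log ‖y (i + 1)‖ = Real.log ‖y i‖ + Real.log ‖mact (A i) (z i)‖ := by
        rw [hynorm1, Real.log_mul hyipos.ne' hAzpos.ne']
      have hfb : f (i + 1) - f i =
          Real.log ‖mact (A i) (u i)‖ - Real.log ‖mact (A i) (z i)‖ := by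
        rw [hfdef]
        simp only []
        rw [hxlog, hylog]
        ring
      rw [hfb, hddef]
      exact step_bound (A i) C hC hAiu hAin hAiinv (u i) (z i) (hunorm i hi.le) (hznorm i hi.le)
    have hsum : f n - f 0 ≤ (n : ℝ) * (2 * C ^ 2 * ε) := by
      rw [← htel]
      calc ∑ i ∈ Finset.range n, (f (i + 1) - f i) ≤ ∑ i ∈ Finset.range n, 2 * C ^ 2 * d i :=
        Finset.sum_le_sum hstep
      _ ≤ ∑ _i ∈ Finset.range n, 2 * C ^ 2 * ε := by
          apply Finset.sum_le_sum
          intro i hi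
          rw [Finset.mem_range] at hi
          have := hcase i hi
          nlinarith [abs_nonneg (u i 0 * z i 1 - u i 1 * z i 0)]
      _ = (n : ℝ) * (2 * C ^ 2 * ε) := by
          rw [Finset.sum_const, Finset.card_range, nsmul_eq_mul]
    have hf0 : f n - f 0 = Real.log |μ₁| - Real.log |μ₂| := by
      have hxn : x n = μ₁ • v0 := by
        rw [hxdef]
        simp only []
        rw [← hMdef, hv0]
      have hyn : y n = μ₂ • w0 := by
        rw [hydef]
        simp only []
        rw [← hMdef, hw0]
      have hx0 : x 0 = v0 := by rw [hxdef]; simp only [prodRange_zero, mact_one]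
      have hy0 : y 0 = w0 := by rw [hydef]; simp only [prodRange_zero, mact_one]
      have hv0pos : 0 < ‖v0‖ := norm_pos_iff.mpr hv0ne
      have hw0pos : 0 < ‖w0‖ := norm_pos_iff.mpr hw0ne
      rw [hfdef]
      simp only []
      rw [hxn, hyn, hx0, hy0, norm_smul, norm_smul, Real.norm_eq_abs, Real.norm_eq_abs,
        Real.log_mul (abs_ne_zero.mpr hμ1ne) hv0pos.ne',
        Real.log_mul (abs_ne_zero.mpr hμ2ne) hw0pos.ne']
      ring
    have hμ1' : (n : ℝ) * (χ / 2) < Real.log |μ₁| := by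
      have h := mul_lt_mul_of_pos_left hμ1 hn0
      rw [show (n:ℝ) * (1 / n * Real.log |μ₁|) = Real.log |μ₁| by field_simp] at h
      exact h
    have hμ2' : Real.log |μ₂| < (n : ℝ) * χ := by
      have h := mul_lt_mul_of_pos_left hμ2 hn0
      rw [show (n:ℝ) * (1 / n * Real.log |μ₂|) = Real.log |μ₂| by field_simp] at h
      exact h
    have hεeq : 2 * C ^ 2 * ε = -χ / 4 := by
      rw [hεdef]
      field_simp
      ring
    rw [hεeq] at hsum
    rw [hf0] at hsum
    nlinarith
end

section
/- Let n ≥ 1 and let 𝒦 be a compact subset of GL(2,ℝ)ⁿ such that every tuple (A_i)_{i∈ℤ/nℤ} in 𝒦 is a contracting linear cocycle, i.e. the powers of the product A_{n−1}···A_0 tend to 0. Then there exists an integer k ≥ 1 such that for every (A_i) ∈ 𝒦 and every i ∈ ℤ/nℤ, ‖A_{i+k−1}···A_{i+1}·A_i‖ < 1/2, where indices are taken mod n. -/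
open Filter Topology

namespace Stmt15Aux

open Filter Topology

noncomputable def mCLMl : M2 →ₗ[ℝ] (E2 →L[ℝ] E2) where
  toFun := mCLM
  map_add' x y := by simp [mCLM, map_add]
  map_smul' c A := by
    refine ContinuousLinearMap.ext fun x => ?_
    have h : Matrix.toEuclideanLin (c • A) = c • Matrix.toEuclideanLin A := map_smul _ c A
    calc (Matrix.toEuclideanCLM (𝕜 := ℝ) (c • A)) x
        = (Matrix.toEuclideanLin (c • A)) x := rfl
      _ = c • (Matrix.toEuclideanLin A) x := by rw [h]; rfl
      _ = (RingHom.id ℝ c • Matrix.toEuclideanCLM (𝕜 := ℝ) A) x := rfl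

lemma continuous_mnorm : Continuous mnorm := by
  have h : Continuous mCLM := mCLMl.continuous_of_finiteDimensional
  exact h.norm

lemma mnorm_zero : mnorm 0 = 0 := by simp [mnorm, mCLM, map_zero]

lemma mnorm_pow_le (A : M2) {t : ℕ} (ht : 0 < t) : mnorm (A ^ t) ≤ mnorm A ^ t := by
  have h : mCLM (A ^ t) = (mCLM A) ^ t := by simp [mCLM, map_pow]
  rw [mnorm, h]
  exact norm_pow_le' _ ht

lemma partProd_succ (n : ℕ) (A : ZMod n → M2) (i : ZMod n) (j : ℕ) :
    partProd n A i (j + 1) = A (i + (j : ZMod n)) * partProd n A i j := by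
  unfold partProd
  rw [List.range_succ]
  simp

lemma partProd_add (n : ℕ) (A : ZMod n → M2) (i : ZMod n) (a b : ℕ) :
    partProd n A i (a + b) = partProd n A (i + (a : ZMod n)) b * partProd n A i a := by
  induction b with
  | zero => simp [partProd]
  | succ b ih =>
    have h : a + (b + 1) = (a + b) + 1 := by ring
    rw [h, partProd_succ, ih, partProd_succ, mul_assoc]
    congr 2
    push_cast
    ring_nf

lemma partProd_npow (n : ℕ) (A : ZMod n → M2) (i : ZMod n) (m : ℕ) :
    partProd n A i (n * m) = (partProd n A i n) ^ m := by
  induction m with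
  | zero => simp [partProd]
  | succ m ih =>
    have hnm : n * (m + 1) = n * m + n := by ring
    rw [hnm, partProd_add, ih]
    have hz : ((n * m : ℕ) : ZMod n) = 0 := by push_cast; simp
    rw [hz, add_zero, pow_succ']

lemma cocProd_eq (n : ℕ) (A : ZMod n → M2) : cocProd n A = partProd n A 0 n := by
  simp [cocProd, partProd, zero_add]

lemma partProd_isUnit (n : ℕ) (A : ZMod n → M2) (hU : ∀ i, IsUnit (A i)) (i : ZMod n)
    (j : ℕ) : IsUnit (partProd n A i j) := by
  refine List.prod_isUnit fun m hm => ?_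
  rw [List.mem_reverse] at hm
  obtain ⟨l, -, rfl⟩ := List.mem_map.mp hm
  exact hU _

lemma conj_rel (n : ℕ) [NeZero n] (A : ZMod n → M2) (i : ZMod n) :
    partProd n A i n * partProd n A 0 i.val = partProd n A 0 i.val * partProd n A 0 n := by
  have h1 := partProd_add n A 0 i.val n
  have h2 := partProd_add n A 0 n i.val
  rw [zero_add, ZMod.natCast_zmod_val] at h1
  rw [zero_add, ZMod.natCast_self] at h2
  rw [add_comm] at h1
  rw [h1] at h2
  simpa using h2

lemma half_pow (B : M2) {a b : ℕ} (_ha : 1 ≤ a) (hab : a ∣ b) (hb : 1 ≤ b)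
    (h : mnorm (B ^ a) < 1 / 2) : mnorm (B ^ b) < 1 / 2 := by
  obtain ⟨t, rfl⟩ := hab
  have ht : 0 < t := by
    rcases Nat.eq_zero_or_pos t with h0 | h0
    · subst h0; simp at hb
    · exact h0
  have h0 : 0 ≤ mnorm (B ^ a) := norm_nonneg _
  calc mnorm (B ^ (a * t)) = mnorm ((B ^ a) ^ t) := by rw [pow_mul]
    _ ≤ mnorm (B ^ a) ^ t := mnorm_pow_le _ ht
    _ < (1 / 2 : ℝ) ^ t := pow_lt_pow_left₀ h h0 ht.ne'
    _ ≤ 1 / 2 := pow_le_of_le_one (by norm_num) (by norm_num) ht.ne'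

lemma exists_m_one (n : ℕ) [NeZero n] (A : ZMod n → M2) (hU : ∀ i, IsUnit (A i))
    (hT : Tendsto (fun m : ℕ => cocProd n A ^ m) atTop (𝓝 (0 : M2))) (i : ZMod n) :
    ∃ m : ℕ, 1 ≤ m ∧ mnorm ((partProd n A i n) ^ m) < 1 / 2 := by
  obtain ⟨u, hu⟩ := partProd_isUnit n A hU 0 i.val
  have hcomm : partProd n A i n * ↑u = ↑u * cocProd n A := by
    rw [hu, cocProd_eq]; exact conj_rel n A i
  have hconj : partProd n A i n = ↑u * cocProd n A * ↑u⁻¹ := by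
    calc partProd n A i n = partProd n A i n * (↑u * ↑u⁻¹) := by
            rw [u.mul_inv, mul_one]
      _ = (partProd n A i n * ↑u) * ↑u⁻¹ := by rw [mul_assoc]
      _ = ↑u * cocProd n A * ↑u⁻¹ := by rw [hcomm]
  have hpow : ∀ m : ℕ, (partProd n A i n) ^ m = ↑u * cocProd n A ^ m * ↑u⁻¹ := by
    intro m
    rw [hconj, Units.conj_pow]
  have hT2 : Tendsto (fun m : ℕ => (partProd n A i n) ^ m) atTop (𝓝 (0 : M2)) := by
    simp only [hpow]
    have := (hT.const_mul (↑u : M2)).mul_const (↑u⁻¹ : M2)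
    simpa using this
  have hT3 : Tendsto (fun m : ℕ => mnorm ((partProd n A i n) ^ m)) atTop (𝓝 0) := by
    have := (continuous_mnorm.tendsto 0).comp hT2
    rwa [mnorm_zero] at this
  have hev : ∀ᶠ m : ℕ in atTop, mnorm ((partProd n A i n) ^ m) < 1 / 2 :=
    hT3.eventually_lt_const (by norm_num)
  obtain ⟨m, hm1, hm2⟩ := ((eventually_ge_atTop 1).and hev).exists
  exact ⟨m, hm1, hm2⟩

lemma exists_m_all (n : ℕ) [NeZero n] (A : ZMod n → M2) (hU : ∀ i, IsUnit (A i))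
    (hT : Tendsto (fun m : ℕ => cocProd n A ^ m) atTop (𝓝 (0 : M2))) :
    ∃ m : ℕ, 1 ≤ m ∧ ∀ i : ZMod n, mnorm (partProd n A i (n * m)) < 1 / 2 := by
  choose g hg1 hg2 using exists_m_one n A hU hT
  refine ⟨∏ i : ZMod n, g i, Finset.one_le_prod' fun i _ => hg1 i, fun i => ?_⟩
  rw [partProd_npow]
  exact half_pow _ (hg1 i) (Finset.dvd_prod_of_mem g (Finset.mem_univ i))
    (Finset.one_le_prod' fun j _ => hg1 j) (hg2 i)

lemma continuous_part (n k : ℕ) (i : ZMod n) :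
    Continuous fun A : ZMod n → M2 => mnorm (partProd n A i k) := by
  refine continuous_mnorm.comp ?_
  induction k with
  | zero =>
    have h : ∀ A : ZMod n → M2, partProd n A i 0 = 1 := fun A => by simp [partProd]
    simp only [h]
    exact continuous_const
  | succ k ih =>
    simp only [partProd_succ]
    exact (continuous_apply _).mul ih

end Stmt15Aux

/-- On a compact set of contracting linear cocycles of period `n`, some
uniform number `k` of consecutive steps contracts by a factor `1/2` from every starting index. -/
theorem stmt15 (n : ℕ) (hn : 1 ≤ n) (𝒦 : Set (ZMod n → M2)) (hcpt : IsCompact 𝒦)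
    (hcon : ∀ A ∈ 𝒦, (∀ i, IsUnit (A i)) ∧
      Filter.Tendsto (fun m : ℕ => cocProd n A ^ m) Filter.atTop (nhds (0 : M2))) :
    ∃ k : ℕ, 1 ≤ k ∧ ∀ A ∈ 𝒦, ∀ i : ZMod n, mnorm (partProd n A i k) < 1 / 2 := by
  have hnz : NeZero n := ⟨Nat.one_le_iff_ne_zero.mp hn⟩
  have H : ∀ a : 𝒦, ∃ m : ℕ, 1 ≤ m ∧
      ∀ i : ZMod n, mnorm (partProd n (↑a) i (n * m)) < 1 / 2 := fun a =>
    Stmt15Aux.exists_m_all n (↑a) (hcon a a.2).1 (hcon a a.2).2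
  choose g hg1 hg2 using H
  set V : 𝒦 → Set (ZMod n → M2) := fun a =>
    ⋂ i : ZMod n, {B | mnorm (partProd n B i (n * g a)) < 1 / 2} with hV
  have hVo : ∀ a, IsOpen (V a) := fun a =>
    isOpen_iInter_of_finite fun i =>
      isOpen_lt (Stmt15Aux.continuous_part n (n * g a) i) continuous_const
  have hcov : 𝒦 ⊆ ⋃ a : 𝒦, V a := fun B hB =>
    Set.mem_iUnion.mpr ⟨⟨B, hB⟩, Set.mem_iInter.mpr fun i => hg2 ⟨B, hB⟩ i⟩
  obtain ⟨t, ht⟩ := hcpt.elim_finite_subcover V hVo hcov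
  set m : ℕ := ∏ a ∈ t, g a with hm
  have hm1 : 1 ≤ m := Finset.one_le_prod' fun a _ => hg1 a
  refine ⟨n * m, Nat.one_le_iff_ne_zero.mpr (by positivity), fun A hA i => ?_⟩
  obtain ⟨a, hat, hAa⟩ := Set.mem_iUnion₂.mp (ht hA)
  have hAi : mnorm (partProd n A i (n * g a)) < 1 / 2 := Set.mem_iInter.mp hAa i
  rw [Stmt15Aux.partProd_npow] at hAi ⊢
  exact Stmt15Aux.half_pow _ (hg1 a) (Finset.dvd_prod_of_mem g hat) hm1 hAi
end

section
/- Let E be a finite-dimensional real normed vector space and let F : E → E be a C¹ map with F(0) = 0. Suppose there exist an integer k ≥ 1 and a constant c < 1 such that ‖D(F^k)(x)‖ ≤ c for every x ∈ E (where F^k is the k-th iterate and D denotes the derivative). Then every orbit converges to the origin: for every x ∈ E, F^m(x) → 0 as m → ∞. -/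
open Filter Topology

/-- If some iterate of a `C¹` map fixing the origin of a finite-dimensional
normed space has derivative of norm at most `c < 1` everywhere, then every orbit converges to
the origin. -/
theorem stmt18 (E : Type*) [NormedAddCommGroup E] [NormedSpace ℝ E] [FiniteDimensional ℝ E]
    (F : E → E) (hF : ContDiff ℝ 1 F) (h0 : F 0 = 0)
    (k : ℕ) (hk : 1 ≤ k) (c : ℝ) (hc : c < 1)
    (hD : ∀ x : E, ‖fderiv ℝ (F^[k]) x‖ ≤ c) :
    ∀ x : E, Tendsto (fun m => F^[m] x) atTop (𝓝 (0 : E)) := by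
  intro x
  have hc0 : 0 ≤ c := le_trans (norm_nonneg _) (hD 0)
  set G := F^[k] with hG
  have hGdiff : Differentiable ℝ G := (hF.differentiable one_ne_zero).iterate k
  have hlip : LipschitzWith c.toNNReal G := by
    apply lipschitzWith_of_nnnorm_fderiv_le hGdiff
    intro y
    rw [← NNReal.coe_le_coe, coe_nnnorm, Real.coe_toNNReal _ hc0]
    exact hD y
  have hG0 : G 0 = 0 := Function.iterate_fixed h0 k
  have hiter : ∀ n : ℕ, ‖G^[n] x‖ ≤ c ^ n * ‖x‖ := by
    intro n
    have := (hlip.iterate n).dist_le_mul x 0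
    simpa [hG0, Function.iterate_fixed hG0 n, dist_eq_norm, Real.coe_toNNReal _ hc0]
      using this
  have htend : Tendsto (fun n => G^[n] x) atTop (𝓝 0) := by
    have h1 : Tendsto (fun n : ℕ => c ^ n * ‖x‖) atTop (𝓝 (0 * ‖x‖)) :=
      (tendsto_pow_atTop_nhds_zero_of_lt_one hc0 hc).mul_const _
    rw [zero_mul] at h1
    refine squeeze_zero_norm hiter h1
  rw [Metric.tendsto_atTop]
  intro ε hε
  -- For each r < k, continuity of F^[r] at 0
  have hcont : ∀ r : ℕ, ∃ δ > 0, ∀ y : E, ‖y‖ < δ → ‖F^[r] y‖ < ε := by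
    intro r
    have hc' : Continuous F^[r] := (hF.continuous).iterate r
    have h0' : F^[r] 0 = 0 := Function.iterate_fixed h0 r
    have := Metric.continuous_iff.mp hc' 0 ε hε
    obtain ⟨δ, hδ, hδ'⟩ := this
    exact ⟨δ, hδ, fun y hy => by
      have := hδ' y (by simpa [dist_eq_norm] using hy)
      simpa [dist_eq_norm, h0'] using this⟩
  choose δ hδpos hδ using hcont
  obtain ⟨δ0, hδ0pos, hδ0⟩ : ∃ δ0 > 0, ∀ r < k, δ0 ≤ δ r := by
    rcases (Finset.range k).exists_min_image δ ⟨0, Finset.mem_range.mpr hk⟩ with ⟨r0, hr0, hmin⟩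
    exact ⟨δ r0, hδpos r0, fun r hr => hmin r (Finset.mem_range.mpr hr)⟩
  rw [Metric.tendsto_atTop] at htend
  obtain ⟨N, hN⟩ := htend δ0 hδ0pos
  refine ⟨N * k + k, fun m hm => ?_⟩
  have hkpos : 0 < k := hk
  have hdiv : m / k ≥ N := by
    have : N * k ≤ m := le_trans (Nat.le_add_right _ _) hm
    exact Nat.le_div_iff_mul_le hkpos |>.mpr this
  have hmod : m % k < k := Nat.mod_lt _ hkpos
  have hdecomp : F^[m] x = F^[m % k] (G^[m / k] x) := by
    conv_lhs => rw [← Nat.mod_add_div m k]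
    rw [Function.iterate_add_apply, hG, Function.iterate_mul]
  rw [hdecomp]
  have hsmall : ‖G^[m / k] x‖ < δ (m % k) := by
    have := hN (m / k) hdiv
    rw [dist_eq_norm, sub_zero] at this
    exact lt_of_lt_of_le this (hδ0 _ hmod)
  have := hδ (m % k) _ hsmall
  simpa [dist_eq_norm] using this
end

section
/- Let ε > 0 and let (A_i)_{i∈ℤ/nℤ} be an ε-flexible linear cocycle in GL(2,ℝ). Then there exists η > 0 such that every linear cocycle (B_i)_{i∈ℤ/nℤ} in GL(2,ℝ) with max_i ‖B_i − A_i‖ < η is 2ε-flexible; that is, flexibility is a robust property. -/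
open Filter Topology

/-- An `ε`-flexible linear cocycle over `ℤ/nℤ` (Definition 1.1 of the paper). -/
def IsFlexible (n : ℕ) (ε : ℝ) (A : ZMod n → M2) : Prop :=
  ∃ Af : ℝ → ZMod n → M2,
    -- a continuous one-parameter family of linear cocycles over `t ∈ [-1, 1]`
    (∀ i, ContinuousOn (fun t => Af t i) (Set.Icc (-1 : ℝ) 1)) ∧
    (∀ t ∈ Set.Icc (-1 : ℝ) 1, ∀ i, IsUnit (Af t i)) ∧
    -- the diameter of the family is `< ε`
    (∀ s ∈ Set.Icc (-1 : ℝ) 1, ∀ t ∈ Set.Icc (-1 : ℝ) 1, ∀ i,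
      mnorm (Af s i - Af t i) < ε) ∧
    -- at `t = 0` it is the given cocycle
    Af 0 = A ∧
    -- at `t = -1` the product in the period is a homothety
    (∃ c : ℝ, cocProd n (Af (-1)) = c • (1 : M2)) ∧
    -- for `t ∈ (-1,1)` the product has two distinct positive contracting eigenvalues
    (∀ t ∈ Set.Ioo (-1 : ℝ) 1, ∃ μ₁ μ₂ : ℝ, 0 < μ₂ ∧ μ₂ < μ₁ ∧ μ₁ < 1 ∧
      (cocProd n (Af t)).charpoly
        = (Polynomial.X - Polynomial.C μ₁) * (Polynomial.X - Polynomial.C μ₂)) ∧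
    -- the smallest eigenvalue of the product is `< 1` for every `t ∈ [-1,1]`
    (∀ t ∈ Set.Icc (-1 : ℝ) 1, ∃ μ : ℝ, μ < 1 ∧
      (cocProd n (Af t)).charpoly.IsRoot μ ∧
      ∀ μ' : ℝ, (cocProd n (Af t)).charpoly.IsRoot μ' → μ ≤ μ') ∧
    -- at `t = 1` the product has a real positive eigenvalue equal to `1`
    (cocProd n (Af 1)).charpoly.IsRoot 1

namespace Robust

noncomputable section
open Polynomial

/-! ### `mnorm` lemmas -/

lemma mnorm_nonneg (X : M2) : 0 ≤ mnorm X := norm_nonneg _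

lemma mnorm_zero : mnorm 0 = 0 := by simp [mnorm, mCLM, map_zero]

lemma mnorm_one : mnorm 1 = 1 := by
  simp only [mnorm, mCLM, map_one]; exact norm_one

lemma mnorm_add_le (X Y : M2) : mnorm (X + Y) ≤ mnorm X + mnorm Y := by
  simp only [mnorm, mCLM, map_add]; exact norm_add_le _ _

lemma mnorm_mul_le (X Y : M2) : mnorm (X * Y) ≤ mnorm X * mnorm Y := by
  simp only [mnorm, mCLM, map_mul]
  exact norm_mul_le _ _

lemma mnorm_smul (c : ℝ) (X : M2) : mnorm (c • X) = |c| * mnorm X := by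
  simp only [mnorm, mCLM, map_smul]
  exact (norm_smul c (Matrix.toEuclideanCLM (𝕜 := ℝ) X)).trans (by simp)

lemma mnorm_le_add (X Y : M2) : mnorm X ≤ mnorm Y + mnorm (X - Y) := by
  have h : X = Y + (X - Y) := by abel
  calc mnorm X = mnorm (Y + (X - Y)) := by rw [← h]
  _ ≤ _ := mnorm_add_le _ _

lemma coord_le_norm (x : E2) (i : Fin 2) : |x i| ≤ ‖x‖ := by
  rw [EuclideanSpace.norm_eq]
  calc |x i| = Real.sqrt (‖x i‖^2) := by
        rw [Real.sqrt_sq (norm_nonneg _)]; exact (Real.norm_eq_abs _).symm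
  _ ≤ _ := Real.sqrt_le_sqrt
      (Finset.single_le_sum (fun j _ => sq_nonneg ‖x j‖) (Finset.mem_univ i))

lemma entry_le_mnorm (M : M2) (i j : Fin 2) : |M i j| ≤ mnorm M := by
  have h1 : mCLM M (EuclideanSpace.single j 1) i = M i j := by
    rw [mCLM, EuclideanSpace.single, ← PiLp.toLp_single, Matrix.toEuclideanCLM_toLp]
    simp [Matrix.mulVec_single]
  calc |M i j| = |mCLM M (EuclideanSpace.single j 1) i| := by rw [h1]
  _ ≤ ‖mCLM M (EuclideanSpace.single j 1)‖ := coord_le_norm _ _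
  _ ≤ mnorm M * ‖(EuclideanSpace.single j (1:ℝ) : E2)‖ := (mCLM M).le_opNorm _
  _ = mnorm M := by rw [EuclideanSpace.norm_single]; simp

lemma continuous_mnorm : Continuous mnorm := by
  have h : Continuous (fun A : M2 => mCLM A) :=
    LinearMap.continuous_of_finiteDimensional (𝕜 := ℝ)
      { toFun := mCLM, map_add' := fun a b => by simp [mCLM, map_add],
        map_smul' := fun c a => by simp [mCLM, map_smul] }
  exact continuous_norm.comp h

lemma continuous_trace2 : Continuous (fun M : M2 => Matrix.trace M) := by
  simp only [Matrix.trace_fin_two]; fun_prop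

lemma continuous_det2 : Continuous (fun M : M2 => Matrix.det M) := by
  simp only [Matrix.det_fin_two]; fun_prop

lemma trace_sub_le (M N : M2) : |M.trace - N.trace| ≤ 2 * mnorm (M - N) := by
  have h : M.trace - N.trace = (M - N) 0 0 + (M - N) 1 1 := by
    simp [Matrix.trace_fin_two, Matrix.sub_apply]; ring
  rw [h]
  calc |(M - N) 0 0 + (M - N) 1 1| ≤ |(M - N) 0 0| + |(M - N) 1 1| := abs_add_le _ _
  _ ≤ _ := by linarith [entry_le_mnorm (M - N) 0 0, entry_le_mnorm (M - N) 1 1]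

lemma abs_trace_le (M : M2) : |M.trace| ≤ 2 * mnorm M := by
  rw [Matrix.trace_fin_two]
  calc |M 0 0 + M 1 1| ≤ |M 0 0| + |M 1 1| := abs_add_le _ _
  _ ≤ _ := by linarith [entry_le_mnorm M 0 0, entry_le_mnorm M 1 1]

lemma det_sub_le (M N : M2) (R : ℝ) (hM : mnorm M ≤ R) (hN : mnorm N ≤ R) :
    |M.det - N.det| ≤ 4 * R * mnorm (M - N) := by
  have e : ∀ i j, |M i j - N i j| ≤ mnorm (M - N) := fun i j => by
    simpa [Matrix.sub_apply] using entry_le_mnorm (M - N) i j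
  have e0 : 0 ≤ mnorm (M - N) := mnorm_nonneg _
  have eM : ∀ i j, |M i j| ≤ R := fun i j => (entry_le_mnorm M i j).trans hM
  have eN : ∀ i j, |N i j| ≤ R := fun i j => (entry_le_mnorm N i j).trans hN
  have hR0 : 0 ≤ R := (abs_nonneg _).trans (eM 0 0)
  rw [Matrix.det_fin_two, Matrix.det_fin_two]
  have t1 : |(M 0 0 - N 0 0) * M 1 1| ≤ mnorm (M - N) * R := by
    rw [abs_mul]; exact mul_le_mul (e 0 0) (eM 1 1) (abs_nonneg _) e0
  have t2 : |N 0 0 * (M 1 1 - N 1 1)| ≤ R * mnorm (M - N) := by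
    rw [abs_mul]; exact mul_le_mul (eN 0 0) (e 1 1) (abs_nonneg _) hR0
  have t3 : |(M 0 1 - N 0 1) * M 1 0| ≤ mnorm (M - N) * R := by
    rw [abs_mul]; exact mul_le_mul (e 0 1) (eM 1 0) (abs_nonneg _) e0
  have t4 : |N 0 1 * (M 1 0 - N 1 0)| ≤ R * mnorm (M - N) := by
    rw [abs_mul]; exact mul_le_mul (eN 0 1) (e 1 0) (abs_nonneg _) hR0
  rw [abs_le]
  constructor <;> nlinarith [abs_le.mp t1, abs_le.mp t2, abs_le.mp t3, abs_le.mp t4]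

/-! ### charpoly of 2×2 matrices -/

lemma charpoly_fin_two' (M : M2) : M.charpoly = X^2 - C (M.trace) * X + C (M.det) := by
  rw [Matrix.charpoly, Matrix.det_fin_two]
  simp [Matrix.charmatrix_apply_eq, Matrix.charmatrix_apply_ne, Matrix.trace_fin_two,
    Matrix.det_fin_two]
  ring

lemma trace_det_of_factor (M : M2) (μ₁ μ₂ : ℝ)
    (h : M.charpoly = (X - C μ₁) * (X - C μ₂)) :
    M.trace = μ₁ + μ₂ ∧ M.det = μ₁ * μ₂ := by
  have h2 : (X^2 - C M.trace * X + C M.det : ℝ[X]) = (X - C μ₁) * (X - C μ₂) :=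
    (charpoly_fin_two' M).symm.trans h
  have e0 := congrArg (Polynomial.eval 0) h2
  have e1 := congrArg (Polynomial.eval 1) h2
  have em := congrArg (Polynomial.eval (-1)) h2
  simp only [Polynomial.eval_mul, Polynomial.eval_sub, Polynomial.eval_add,
    Polynomial.eval_pow, Polynomial.eval_X, Polynomial.eval_C] at e0 e1 em
  constructor <;> nlinarith [e0, e1, em]

lemma factor_of_conds (M : M2) (h1 : 0 < M.trace) (h2 : 0 < M.det) (h3 : M.trace < 2)
    (h4 : 0 < M.trace^2 - 4*M.det) (h5 : 0 < 4 - 4*M.trace + 4*M.det) :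
    ∃ μ₁ μ₂ : ℝ, 0 < μ₂ ∧ μ₂ < μ₁ ∧ μ₁ < 1 ∧
      M.charpoly = (X - C μ₁) * (X - C μ₂) := by
  set T := M.trace
  set D := M.det
  set s := Real.sqrt (T^2 - 4*D) with hs
  have hs0 : 0 < s := Real.sqrt_pos.mpr h4
  have hs2 : s^2 = T^2 - 4*D := Real.sq_sqrt h4.le
  have hTs : s < T := by nlinarith
  have hTs2 : s < 2 - T := by nlinarith
  refine ⟨(T+s)/2, (T-s)/2, by linarith, by linarith, by linarith, ?_⟩
  rw [charpoly_fin_two']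
  have hsum : (C T : ℝ[X]) = C ((T+s)/2) + C ((T-s)/2) := by
    rw [← map_add]; congr 1; ring
  have hprod : (C D : ℝ[X]) = C ((T+s)/2) * C ((T-s)/2) := by
    rw [← map_mul]; congr 1
    have : ((T+s)/2) * ((T-s)/2) = (T^2 - s^2)/4 := by ring
    rw [this, hs2]; ring
  rw [hsum, hprod]; ring

lemma root_of_factor {a b μ' : ℝ}
    (h : Polynomial.IsRoot ((X - C a) * (X - C b)) μ') : μ' = a ∨ μ' = b := by
  simp only [Polynomial.IsRoot, Polynomial.eval_mul, Polynomial.eval_sub,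
    Polynomial.eval_X, Polynomial.eval_C, mul_eq_zero, sub_eq_zero] at h
  exact h

/-! ### iterated products -/

def Q (f : ℕ → M2) (j : ℕ) : M2 := (((List.range j).map f).reverse).prod

lemma Q_succ (f : ℕ → M2) (j : ℕ) : Q f (j+1) = f j * Q f j := by
  simp [Q, List.range_succ]

lemma cocProd_eq_Q (n : ℕ) (C : ZMod n → M2) :
    cocProd n C = Q (fun l => C (l : ZMod n)) n := by
  simp only [cocProd, Q, bind_pure_comp, List.map_eq_map, List.map_map]; rfl

lemma Q_norm_le (f : ℕ → M2) (R : ℝ) (hR : 0 ≤ R) (h : ∀ l, mnorm (f l) ≤ R) :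
    ∀ j, mnorm (Q f j) ≤ R^j := by
  intro j
  induction j with
  | zero => simp only [Q, List.range_zero, List.map_nil, List.reverse_nil, List.prod_nil,
      pow_zero]; exact le_of_eq mnorm_one
  | succ j ih =>
    rw [Q_succ, pow_succ]
    calc mnorm (f j * Q f j) ≤ mnorm (f j) * mnorm (Q f j) := mnorm_mul_le _ _
    _ ≤ R * R^j := mul_le_mul (h j) ih (mnorm_nonneg _) hR
    _ = R^j * R := by ring

lemma Q_diff_le (f g : ℕ → M2) (R δ : ℝ) (hR : 0 ≤ R) (hδ0 : 0 ≤ δ) (hδ1 : δ ≤ 1)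
    (hg : ∀ l, mnorm (g l) ≤ R) (hfg : ∀ l, mnorm (f l - g l) ≤ δ) :
    ∀ j, mnorm (Q f j - Q g j) ≤ j * (R+1)^j * δ := by
  have hf : ∀ l, mnorm (f l) ≤ R + 1 := fun l =>
    (mnorm_le_add (f l) (g l)).trans (by linarith [hg l, hfg l])
  have hQf : ∀ j, mnorm (Q f j) ≤ (R+1)^j := Q_norm_le f (R+1) (by linarith) hf
  intro j
  induction j with
  | zero => simp [Q, mnorm_zero]
  | succ j ih =>
    have key : Q f (j+1) - Q g (j+1)
        = (f j - g j) * Q f j + g j * (Q f j - Q g j) := by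
      rw [Q_succ, Q_succ]; noncomm_ring
    have hp : (0:ℝ) ≤ (R+1)^j := by positivity
    calc mnorm (Q f (j+1) - Q g (j+1))
        ≤ mnorm ((f j - g j) * Q f j) + mnorm (g j * (Q f j - Q g j)) := by
          rw [key]; exact mnorm_add_le _ _
    _ ≤ δ * (R+1)^j + R * (j * (R+1)^j * δ) := by
        have b1 : mnorm ((f j - g j) * Q f j) ≤ δ * (R+1)^j :=
          (mnorm_mul_le _ _).trans (mul_le_mul (hfg j) (hQf j) (mnorm_nonneg _) hδ0)
        have b2 : mnorm (g j * (Q f j - Q g j)) ≤ R * (j * (R+1)^j * δ) :=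
          (mnorm_mul_le _ _).trans (mul_le_mul (hg j) ih (mnorm_nonneg _) hR)
        linarith
    _ ≤ (j+1 : ℕ) * (R+1)^(j+1) * δ := by
        push_cast
        rw [pow_succ]
        have hj : (0:ℝ) ≤ (j:ℝ) := Nat.cast_nonneg j
        nlinarith [mul_nonneg (mul_nonneg hj hp) hδ0, mul_nonneg hp hδ0,
          mul_nonneg (mul_nonneg (mul_nonneg hj hp) hδ0) hR,
          mul_nonneg (mul_nonneg hp hδ0) hR]

lemma Q_contOn {s : Set ℝ} {n : ℕ} (F : ℝ → ZMod n → M2)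
    (h : ∀ i, ContinuousOn (fun t => F t i) s) (j : ℕ) :
    ContinuousOn (fun t => Q (fun l => F t (l : ZMod n)) j) s := by
  induction j with
  | zero =>
    simp only [Q, List.range_zero, List.map_nil, List.reverse_nil, List.prod_nil]
    exact continuousOn_const
  | succ j ih =>
    simp only [Q_succ]
    exact (h _).mul ih

end
end Robust

namespace Robust
noncomputable section
open Polynomial

lemma units_of_Q_det_ne (n : ℕ) [NeZero n] (Cc : ZMod n → M2)
    (h : (Q (fun l => Cc (l : ZMod n)) n).det ≠ 0) : ∀ i, IsUnit (Cc i) := by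
  intro i
  rw [Matrix.isUnit_iff_isUnit_det, isUnit_iff_ne_zero]
  intro h0
  apply h
  have hdet : (Q (fun l => Cc (l : ZMod n)) n).det
      = ((((List.range n).map (fun l : ℕ => Cc (l : ZMod n))).reverse).map Matrix.det).prod := by
    rw [Q]
    have := map_list_prod (Matrix.detMonoidHom (n := Fin 2) (R := ℝ))
      (((List.range n).map (fun l : ℕ => Cc (l : ZMod n))).reverse)
    simpa [Matrix.coe_detMonoidHom] using this
  rw [hdet]
  apply List.prod_eq_zero
  rw [List.mem_map]
  refine ⟨Cc i, ?_, h0⟩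
  rw [List.mem_reverse, List.mem_map]
  exact ⟨i.val, List.mem_range.mpr (ZMod.val_lt i),
    congrArg Cc (ZMod.natCast_rightInverse i)⟩

end
end Robust

set_option maxHeartbeats 1600000 in
open Polynomial in
/-- Flexibility is robust: every cocycle close enough to an `ε`-flexible
cocycle is `2ε`-flexible. -/
theorem stmt19 (n : ℕ) (hn : 1 ≤ n) (ε : ℝ) (hε : 0 < ε)
    (A : ZMod n → M2) (hAunit : ∀ i, IsUnit (A i)) (hflex : IsFlexible n ε A) :
    ∃ η > (0 : ℝ), ∀ B : ZMod n → M2, (∀ i, IsUnit (B i)) →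
      (∀ i, mnorm (B i - A i) < η) → IsFlexible n (2 * ε) B := by
  haveI : NeZero n := ⟨by omega⟩
  obtain ⟨Af, hCont, hUnit, hDiam, hAf0, hHom, hIoo, hIccE, hRoot1⟩ := hflex
  have hKsub : Set.Icc (-(1/2) : ℝ) (1/2) ⊆ Set.Icc (-1 : ℝ) 1 := by
    intro x hx
    rw [Set.mem_Icc] at *
    constructor <;> linarith [hx.1, hx.2]
  have hKIoo : ∀ t ∈ Set.Icc (-(1/2) : ℝ) (1/2), t ∈ Set.Ioo (-1 : ℝ) 1 := by
    intro t ht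
    rw [Set.mem_Icc] at ht
    rw [Set.mem_Ioo]
    constructor <;> linarith [ht.1, ht.2]
  set K : Set ℝ := Set.Icc (-(1/2) : ℝ) (1/2) with hK
  have hKcomp : IsCompact K := isCompact_Icc
  have h0K : (0:ℝ) ∈ K := by rw [hK, Set.mem_Icc]; norm_num
  set P : ℝ → M2 := fun t => cocProd n (Af t) with hPdef
  have hPcont : ContinuousOn P (Set.Icc (-1 : ℝ) 1) := by
    have hQ := Robust.Q_contOn Af hCont n
    have hPe : P = fun t => Robust.Q (fun l => Af t (l : ZMod n)) n :=
      funext fun t => Robust.cocProd_eq_Q n (Af t)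
    rw [hPe]; exact hQ
  set T : ℝ → ℝ := fun t => (P t).trace with hTdef
  set D : ℝ → ℝ := fun t => (P t).det with hDdef
  have hTcont : ContinuousOn T (Set.Icc (-1 : ℝ) 1) :=
    Robust.continuous_trace2.comp_continuousOn hPcont
  have hDcont : ContinuousOn D (Set.Icc (-1 : ℝ) 1) :=
    Robust.continuous_det2.comp_continuousOn hPcont
  set m : ℝ → ℝ := fun t => min (min (T t) (D t))
      (min (2 - T t) (min ((T t)^2 - 4*(D t)) (4 - 4*(T t) + 4*(D t)))) with hmdef
  have hmcont : ContinuousOn m K := by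
    have h1 : ContinuousOn T K := hTcont.mono hKsub
    have h2 : ContinuousOn D K := hDcont.mono hKsub
    exact (h1.inf h2).inf ((continuousOn_const.sub h1).inf
      (((h1.pow 2).sub (continuousOn_const.mul h2)).inf
        ((continuousOn_const.sub (continuousOn_const.mul h1)).add
          (continuousOn_const.mul h2))))
  have hmpos : ∀ t ∈ K, 0 < m t := by
    intro t ht
    obtain ⟨μ₁, μ₂, h1, h2, h3, hfac⟩ := hIoo t (hKIoo t ht)
    obtain ⟨hTr, hDt⟩ := Robust.trace_det_of_factor _ _ _ hfac
    have hT' : T t = μ₁ + μ₂ := hTr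
    have hD' : D t = μ₁ * μ₂ := hDt
    have hgoal : 0 < min (min (T t) (D t))
        (min (2 - T t) (min ((T t)^2 - 4*(D t)) (4 - 4*(T t) + 4*(D t)))) := by
      rw [hT', hD', lt_min_iff, lt_min_iff, lt_min_iff, lt_min_iff]
      refine ⟨⟨?_, ?_⟩, ?_, ?_, ?_⟩ <;> nlinarith
    exact hgoal
  obtain ⟨t₀, ht₀K, hminOn⟩ := hKcomp.exists_isMinOn ⟨0, h0K⟩ hmcont
  set m₀ : ℝ := m t₀ with hm₀def
  have hm₀pos : 0 < m₀ := hmpos t₀ ht₀K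
  have hm₀le : ∀ t ∈ K, m₀ ≤ m t := fun t ht => isMinOn_iff.mp hminOn t ht
  have hm₀1 : m₀ ≤ 1 := by
    have hrefl : m₀ ≤ min (min (T t₀) (D t₀))
        (min (2 - T t₀) (min ((T t₀)^2 - 4*(D t₀)) (4 - 4*(T t₀) + 4*(D t₀)))) :=
      le_refl m₀
    have hA1 : m₀ ≤ T t₀ := hrefl.trans ((min_le_left _ _).trans (min_le_left _ _))
    have hA2 : m₀ ≤ 2 - T t₀ := hrefl.trans ((min_le_right _ _).trans (min_le_left _ _))
    linarith
  -- uniform bound on the family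
  set ρ : ℝ → ℝ := fun t => ∑ i : ZMod n, mnorm (Af t i) with hρdef
  have hρcont : ContinuousOn ρ K :=
    continuousOn_finset_sum Finset.univ fun i _ =>
      Robust.continuous_mnorm.comp_continuousOn ((hCont i).mono hKsub)
  obtain ⟨t₁, ht₁K, hmaxOn⟩ := hKcomp.exists_isMaxOn ⟨0, h0K⟩ hρcont
  set R : ℝ := ρ t₁ with hRdef
  have hRb : ∀ t ∈ K, ∀ i, mnorm (Af t i) ≤ R := fun t ht i =>
    (Finset.single_le_sum (fun j _ => Robust.mnorm_nonneg (Af t j)) (Finset.mem_univ i)).trans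
      (isMaxOn_iff.mp hmaxOn t ht)
  have hR0 : 0 ≤ R := (Robust.mnorm_nonneg (Af t₁ 0)).trans (hRb t₁ ht₁K 0)
  set S : ℝ := R + 1 with hSdef
  set Xn : ℝ := S^n with hXndef
  have hS1 : (1:ℝ) ≤ S := by rw [hSdef]; linarith
  have hXn1 : (1:ℝ) ≤ Xn := by
    rw [hXndef]
    calc (1:ℝ) = 1^n := (one_pow n).symm
    _ ≤ S^n := pow_le_pow_left₀ (by norm_num) hS1 n
  set W : ℝ := (n:ℝ) * Xn with hWdef
  have hn1 : (1:ℝ) ≤ (n:ℝ) := by exact_mod_cast hn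
  have hW1 : (1:ℝ) ≤ W := by
    rw [hWdef]
    calc (1:ℝ) = 1*1 := by norm_num
    _ ≤ (n:ℝ) * Xn := mul_le_mul hn1 hXn1 (by norm_num) (by linarith)
  set κ : ℝ := 4*Xn*W*(4*Xn+5) + 1 with hκdef
  have hκpos : 0 < κ := by
    rw [hκdef]
    nlinarith [mul_pos (mul_pos (by linarith : (0:ℝ) < 4*Xn) (by linarith : (0:ℝ) < W))
      (by linarith : (0:ℝ) < 4*Xn+5)]
  set η : ℝ := min (ε/4) (min 1 (m₀/κ)) with hηdef
  have hη0 : 0 < η := lt_min (by linarith) (lt_min one_pos (div_pos hm₀pos hκpos))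
  have hη1 : η ≤ 1 := (min_le_right _ _).trans (min_le_left _ _)
  have hηε : η ≤ ε/4 := min_le_left _ _
  have hηm : η ≤ m₀/κ := (min_le_right _ _).trans (min_le_right _ _)
  have hτbig : 4*Xn*W*(4*Xn+5)*η < m₀ := by
    have hc1 : (0:ℝ) ≤ 4*Xn*W*(4*Xn+5) :=
      mul_nonneg (mul_nonneg (mul_nonneg (by norm_num) (by linarith)) (by linarith))
        (by linarith)
    have h1 : 4*Xn*W*(4*Xn+5)*η ≤ (κ - 1) * (m₀/κ) := by
      have he : κ - 1 = 4*Xn*W*(4*Xn+5) := by rw [hκdef]; ring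
      rw [he]
      exact mul_le_mul_of_nonneg_left hηm hc1
    have hqκ : (m₀/κ)*κ = m₀ := div_mul_cancel₀ m₀ (ne_of_gt hκpos)
    have hq0 : 0 < m₀/κ := div_pos hm₀pos hκpos
    nlinarith [h1, hqκ, hq0]
  refine ⟨η, hη0, ?_⟩
  intro B hBunit hBA
  set ψ : ℝ → ℝ := fun t => max (1 - 2*|t|) 0 with hψdef
  have hψcont : Continuous ψ :=
    (continuous_const.sub (continuous_const.mul continuous_abs)).max continuous_const
  have hψ0 : ψ 0 = 1 := by rw [hψdef]; norm_num
  have hψnn : ∀ t, 0 ≤ ψ t := fun t => le_max_right _ _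
  have hψle : ∀ t, ψ t ≤ 1 := fun t =>
    max_le (by have := abs_nonneg t; linarith) zero_le_one
  have hψz : ∀ t : ℝ, 1/2 ≤ |t| → ψ t = 0 := fun t ht => max_eq_right (by linarith)
  set Bf : ℝ → ZMod n → M2 := fun t i => Af t i + ψ t • (B i - A i) with hBfdef
  have hBfAf : ∀ t : ℝ, 1/2 ≤ |t| → Bf t = Af t := by
    intro t ht
    funext i
    show Af t i + ψ t • (B i - A i) = Af t i
    rw [hψz t ht, zero_smul, add_zero]
  have hdiff : ∀ (t : ℝ) i, mnorm (Bf t i - Af t i) ≤ η := by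
    intro t i
    have he : Bf t i - Af t i = ψ t • (B i - A i) := by
      show Af t i + ψ t • (B i - A i) - Af t i = ψ t • (B i - A i)
      abel
    rw [he, Robust.mnorm_smul]
    have hb : |ψ t| * mnorm (B i - A i) ≤ 1 * η :=
      mul_le_mul (by rw [abs_of_nonneg (hψnn t)]; exact hψle t) (hBA i).le
        (Robust.mnorm_nonneg _) zero_le_one
    linarith
  have hgood : ∀ t ∈ K, ∃ μ₁ μ₂ : ℝ, 0 < μ₂ ∧ μ₂ < μ₁ ∧ μ₁ < 1 ∧
      (cocProd n (Bf t)).charpoly = (X - C μ₁) * (X - C μ₂) := by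
    intro t ht
    set f : ℕ → M2 := fun l => Bf t (l : ZMod n) with hfdef
    set g : ℕ → M2 := fun l => Af t (l : ZMod n) with hgdef
    have hfg : ∀ l, mnorm (f l - g l) ≤ η := fun l => hdiff t _
    have hgb : ∀ l, mnorm (g l) ≤ R := fun l => hRb t ht _
    have hQd : mnorm (Robust.Q f n - Robust.Q g n) ≤ W * η := by
      have h := Robust.Q_diff_le f g R η hR0 hη0.le hη1 hgb hfg n
      have he : (n:ℝ) * (R+1)^n * η = W * η := by rw [hWdef, hXndef, hSdef]
      linarith
    have hQfb : mnorm (Robust.Q f n) ≤ Xn := by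
      rw [hXndef]
      apply Robust.Q_norm_le f S (by linarith) ?_ n
      intro l
      calc mnorm (f l) ≤ mnorm (g l) + mnorm (f l - g l) := Robust.mnorm_le_add _ _
      _ ≤ S := by rw [hSdef]; linarith [hgb l, hfg l]
    have hQgb : mnorm (Robust.Q g n) ≤ Xn := by
      rw [hXndef]
      exact Robust.Q_norm_le g S (by linarith)
        (fun l => (hgb l).trans (by rw [hSdef]; linarith)) n
    have hPB : cocProd n (Bf t) = Robust.Q f n := Robust.cocProd_eq_Q n (Bf t)
    have hPA : P t = Robust.Q g n := Robust.cocProd_eq_Q n (Af t)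
    have hT'd : |(Robust.Q f n).trace - T t| ≤ 2*(W*η) := by
      have h := Robust.trace_sub_le (Robust.Q f n) (Robust.Q g n)
      have he : T t = (Robust.Q g n).trace := congrArg Matrix.trace hPA
      rw [he]
      linarith
    have hD'd : |(Robust.Q f n).det - D t| ≤ 4*Xn*(W*η) := by
      have h := Robust.det_sub_le (Robust.Q f n) (Robust.Q g n) Xn hQfb hQgb
      have he : D t = (Robust.Q g n).det := congrArg Matrix.det hPA
      rw [he]
      calc |(Robust.Q f n).det - (Robust.Q g n).det|
          ≤ 4 * Xn * mnorm (Robust.Q f n - Robust.Q g n) := h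
      _ ≤ 4*Xn*(W*η) := mul_le_mul_of_nonneg_left hQd (by linarith)
    have hTb : |T t| ≤ 2*Xn := by
      have he : T t = (Robust.Q g n).trace := congrArg Matrix.trace hPA
      rw [he]
      exact (Robust.abs_trace_le _).trans (by linarith [hQgb])
    have hmt : m₀ ≤ min (min (T t) (D t))
        (min (2 - T t) (min ((T t)^2 - 4*(D t)) (4 - 4*(T t) + 4*(D t)))) := hm₀le t ht
    have h5a := le_min_iff.mp (hmt.trans (min_le_left _ _))
    have h5b := hmt.trans (min_le_right _ _)
    have m2T : m₀ ≤ 2 - T t := h5b.trans (min_le_left _ _)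
    have mΔ : m₀ ≤ (T t)^2 - 4*(D t) := (h5b.trans (min_le_right _ _)).trans (min_le_left _ _)
    have m5 : m₀ ≤ 4 - 4*(T t) + 4*(D t) :=
      (h5b.trans (min_le_right _ _)).trans (min_le_right _ _)
    have mT : m₀ ≤ T t := h5a.1
    have mD : m₀ ≤ D t := h5a.2
    set τ : ℝ := 4*Xn*W*η with hτdef
    have hWη : 0 ≤ W*η := mul_nonneg (by linarith) hη0.le
    have hτ0 : 0 ≤ τ := by
      rw [hτdef]
      exact mul_nonneg (mul_nonneg (mul_nonneg (by norm_num) (by linarith)) (by linarith))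
        hη0.le
    have h2W : 2*(W*η) ≤ τ := by
      rw [hτdef]
      nlinarith [mul_nonneg (mul_nonneg (by linarith : (0:ℝ) ≤ 4*Xn - 2)
        (by linarith : (0:ℝ) ≤ W)) hη0.le]
    have heq4 : 4*Xn*(W*η) = τ := by rw [hτdef]; ring
    have hττ : τ*(4*Xn+5) < m₀ := by
      have he : τ*(4*Xn+5) = 4*Xn*W*(4*Xn+5)*η := by rw [hτdef]; ring
      linarith
    have hτm : τ < m₀ := by
      nlinarith [mul_nonneg hτ0 (by linarith : (0:ℝ) ≤ 4*Xn + 4)]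
    have haT := abs_le.mp hT'd
    have haD := abs_le.mp hD'd
    have haTb := abs_le.mp hTb
    rw [hPB]
    apply Robust.factor_of_conds
    · linarith
    · linarith
    · linarith
    · have hTT : |(Robust.Q f n).trace + T t| ≤ 4*Xn + 1 := by
        rw [abs_le]
        constructor <;> linarith
      have hsq : |(Robust.Q f n).trace^2 - (T t)^2| ≤ τ*(4*Xn+1) := by
        rw [show (Robust.Q f n).trace^2 - (T t)^2
            = ((Robust.Q f n).trace - T t)*((Robust.Q f n).trace + T t) from by ring,
          abs_mul]
        exact mul_le_mul (hT'd.trans h2W) hTT (abs_nonneg _) hτ0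
      have hring : τ*(4*Xn+1) + 4*τ = τ*(4*Xn+5) := by ring
      have hsq' := abs_le.mp hsq
      linarith
    · have h8 : 8*τ ≤ τ*(4*Xn+5) := by
        nlinarith [mul_nonneg hτ0 (by linarith : (0:ℝ) ≤ 4*Xn - 3)]
      linarith
  refine ⟨Bf, ?_, ?_, ?_, ?_, ?_, ?_, ?_, ?_⟩
  · intro i
    have hfe : (fun t => Bf t i) = fun t => Af t i + ψ t • (B i - A i) := by
      funext t; exact rfl
    rw [hfe]
    exact (hCont i).add ((hψcont.continuousOn).smul continuousOn_const)
  · intro t htI i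
    rcases le_or_gt (1/2 : ℝ) |t| with hc | hc
    · rw [hBfAf t hc]; exact hUnit t htI i
    · have htK : t ∈ K := by
        rw [hK, Set.mem_Icc]; rw [abs_lt] at hc
        constructor <;> linarith [hc.1, hc.2]
      obtain ⟨μ₁, μ₂, h1, h2, h3, hfac⟩ := hgood t htK
      have hdetv : (cocProd n (Bf t)).det = μ₁ * μ₂ :=
        (Robust.trace_det_of_factor _ _ _ hfac).2
      have hdne : (Robust.Q (fun l => Bf t (l : ZMod n)) n).det ≠ 0 := by
        rw [← Robust.cocProd_eq_Q, hdetv]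
        exact ne_of_gt (mul_pos (h1.trans h2) h1)
      exact Robust.units_of_Q_det_ne n (Bf t) hdne i
  · intro s hs t ht i
    have key : Bf s i - Bf t i = (Af s i - Af t i) + (ψ s - ψ t) • (B i - A i) := by
      show Af s i + ψ s • (B i - A i) - (Af t i + ψ t • (B i - A i)) = _
      rw [sub_smul]; abel
    have h1 : |ψ s - ψ t| ≤ 1 :=
      abs_le.mpr ⟨by linarith [hψnn s, hψnn t, hψle s, hψle t],
        by linarith [hψnn s, hψnn t, hψle s, hψle t]⟩
    calc mnorm (Bf s i - Bf t i)
        ≤ mnorm (Af s i - Af t i) + mnorm ((ψ s - ψ t) • (B i - A i)) := by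
          rw [key]; exact Robust.mnorm_add_le _ _
    _ < ε + 1*η := by
        have hd := hDiam s hs t ht i
        have h2 : mnorm ((ψ s - ψ t) • (B i - A i)) ≤ 1*η := by
          rw [Robust.mnorm_smul]
          exact mul_le_mul h1 (hBA i).le (Robust.mnorm_nonneg _) zero_le_one
        linarith
    _ ≤ 2*ε := by linarith
  · funext i
    show Af 0 i + ψ 0 • (B i - A i) = B i
    rw [hψ0, one_smul, hAf0]
    abel
  · obtain ⟨c, hc⟩ := hHom
    refine ⟨c, ?_⟩
    rw [hBfAf (-1) (by rw [abs_neg, abs_one]; norm_num)]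
    exact hc
  · intro t htIoo
    rcases le_or_gt (1/2 : ℝ) |t| with hc | hc
    · have he : cocProd n (Bf t) = cocProd n (Af t) := by rw [hBfAf t hc]
      rw [he]
      exact hIoo t htIoo
    · apply hgood t
      rw [hK, Set.mem_Icc]; rw [abs_lt] at hc
      constructor <;> linarith [hc.1, hc.2]
  · intro t htI
    rcases le_or_gt (1/2 : ℝ) |t| with hc | hc
    · have he : cocProd n (Bf t) = cocProd n (Af t) := by rw [hBfAf t hc]
      rw [he]
      exact hIccE t htI
    · have htK : t ∈ K := by
        rw [hK, Set.mem_Icc]; rw [abs_lt] at hc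
        constructor <;> linarith [hc.1, hc.2]
      obtain ⟨μ₁, μ₂, h1, h2, h3, hfac⟩ := hgood t htK
      refine ⟨μ₂, by linarith, ?_, ?_⟩
      · rw [hfac]
        simp [Polynomial.IsRoot]
      · intro μ' hroot
        rw [hfac] at hroot
        rcases Robust.root_of_factor hroot with h | h
        · rw [h]; linarith
        · rw [h]
  · rw [hBfAf 1 (by rw [abs_one]; norm_num)]
    exact hRoot1
end
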